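/- arXiv:0805.3484 — 3 statements merged into one kernel-verified Lean document; each statement's English description precedes it below -/
import Mathlib

section
/- Let (A,B,C,E) be the CCF of a minimal encoder G of an (n,k,δ) convolutional code C, let (Â,B̂,Ĉ,Ê) be the CCF of a minimal encoder Ĝ of the dual code Ĉ, set Δ = {(X,Y) ∈ F^δ × F^δ : Y = XA + uB for some u ∈ F^k}, C_const = C ∩ F^n, Ω = {(X,Y) ∈ Δ : XC + Y B^T E ∈ C_const}, and K = ker(C Ê^T B̂). Then the map σ: K → F^δ sending X to the unique Y with (X,Y) ∈ Ω is well-defined, linear, and injective; moreover K contains no nonzero σ-invariant subset, i.e. if X ∈ K satisfies σ^i(X) ∈ K for all i ≥ 0, then X = 0. -/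
open Polynomial Matrix
open scoped Classical

set_option linter.unusedSectionVars false
noncomputable section

namespace ConvCode

variable (F : Type) [Field F] [Fintype F]

/-- Hamming weight of a vector. -/
def wt {n : ℕ} (a : Fin n → F) : ℕ := (Finset.univ.filter fun j => a j ≠ 0).card

/-- Weight enumerator of a set of vectors in `F^n`, as a polynomial in `ℂ[W]`. -/
def weSet {n : ℕ} (S : Set (Fin n → F)) : Polynomial ℂ :=
  ∑ a ∈ (Set.toFinite S).toFinset, (Polynomial.X : Polynomial ℂ) ^ wt F a

/-- The `i`-th row degree of a polynomial matrix. -/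
def rowDeg {k n : ℕ} (G : Matrix (Fin k) (Fin n) (Polynomial F)) (i : Fin k) : ℕ :=
  Finset.univ.sup fun j => (G i j).natDegree

/-- `G` is basic: it has a polynomial right inverse. -/
def IsBasic {k n : ℕ} (G : Matrix (Fin k) (Fin n) (Polynomial F)) : Prop :=
  ∃ H : Matrix (Fin n) (Fin k) (Polynomial F), G * H = 1

/-- The degree of the code: maximal degree of the `k × k` minors of `G`. -/
def codeDeg {k n : ℕ} (G : Matrix (Fin k) (Fin n) (Polynomial F)) : ℕ :=
  Finset.univ.sup fun f : Fin k ↪ Fin n => ((G.submatrix id f).det).natDegree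

/-- A minimal (basic) encoder: the sum of the row degrees equals the degree of the code. -/
def IsMinimalEncoder {k n : ℕ} (G : Matrix (Fin k) (Fin n) (Polynomial F)) : Prop :=
  IsBasic F G ∧ ∑ i, rowDeg F G i = codeDeg F G

/-- The convolutional code generated by the encoder `G`. -/
def code {k n : ℕ} (G : Matrix (Fin k) (Fin n) (Polynomial F)) : Set (Fin n → Polynomial F) :=
  Set.range fun u : Fin k → Polynomial F => u ᵥ* G

/-- The (module-theoretic) dual of a convolutional code. -/
def dualCode {n : ℕ} (𝓒 : Set (Fin n → Polynomial F)) : Set (Fin n → Polynomial F) :=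
  {w | ∀ v ∈ 𝓒, w ⬝ᵥ v = 0}

/-- The sequence-space pairing `⟨⟨v,w⟩⟩ = ∑_t v_t w_tᵀ`. -/
def seqPair {n : ℕ} (v w : Fin n → Polynomial F) : F :=
  ∑ j, ∑ t ∈ Finset.range ((v j).natDegree + 1), (v j).coeff t * (w j).coeff t

/-- The sequence space dual of a convolutional code. -/
def seqDual {n : ℕ} (𝓒 : Set (Fin n → Polynomial F)) : Set (Fin n → Polynomial F) :=
  {w | ∀ v ∈ 𝓒, ∀ l : ℕ, seqPair F v (fun j => Polynomial.X ^ l * w j) = 0}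

/-- Index set of the state space of the controller canonical form:
a state index is a pair `(i, ν)` with `i` a row index and `ν < δ_i`. -/
abbrev StateIdx (k : ℕ) (d : Fin k → ℕ) : Type := (i : Fin k) × Fin (d i)

/-- The state-transition matrix `A` of the controller canonical form. -/
def ccfA {k : ℕ} (d : Fin k → ℕ) : Matrix (StateIdx k d) (StateIdx k d) F :=
  Matrix.of fun s t => if s.1 = t.1 ∧ (s.2 : ℕ) + 1 = (t.2 : ℕ) then 1 else 0

/-- The input-to-state matrix `B` of the controller canonical form. -/
def ccfB {k : ℕ} (d : Fin k → ℕ) : Matrix (Fin k) (StateIdx k d) F :=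
  Matrix.of fun i t => if t.1 = i ∧ (t.2 : ℕ) = 0 then 1 else 0

/-- The state-to-output matrix `C` of the controller canonical form. -/
def ccfC {k n : ℕ} (d : Fin k → ℕ) (G : Matrix (Fin k) (Fin n) (Polynomial F)) :
    Matrix (StateIdx k d) (Fin n) F :=
  Matrix.of fun s j => (G s.1 j).coeff ((s.2 : ℕ) + 1)

/-- The matrix `E = G(0)` of the controller canonical form. -/
def ccfE {k n : ℕ} (G : Matrix (Fin k) (Fin n) (Polynomial F)) : Matrix (Fin k) (Fin n) F :=
  Matrix.of fun i j => (G i j).coeff 0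

/-- The state index set of the controller canonical form of `G`. -/
abbrev States {k n : ℕ} (G : Matrix (Fin k) (Fin n) (Polynomial F)) : Type :=
  StateIdx k (rowDeg F G)

def matA {k n : ℕ} (G : Matrix (Fin k) (Fin n) (Polynomial F)) :
    Matrix (States F G) (States F G) F := ccfA F (rowDeg F G)

def matB {k n : ℕ} (G : Matrix (Fin k) (Fin n) (Polynomial F)) :
    Matrix (Fin k) (States F G) F := ccfB F (rowDeg F G)

def matC {k n : ℕ} (G : Matrix (Fin k) (Fin n) (Polynomial F)) :
    Matrix (States F G) (Fin n) F := ccfC F (rowDeg F G) G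

def matE {k n : ℕ} (G : Matrix (Fin k) (Fin n) (Polynomial F)) :
    Matrix (Fin k) (Fin n) F := ccfE F G

/-- The weight adjacency matrix of a state space realization `(A,B,C,E)`. -/
def WAM {σ : Type} [Fintype σ] {k n : ℕ} (A : Matrix σ σ F) (B : Matrix (Fin k) σ F)
    (C : Matrix σ (Fin n) F) (E : Matrix (Fin k) (Fin n) F) :
    Matrix (σ → F) (σ → F) (Polynomial ℂ) :=
  Matrix.of fun X Y =>
    weSet F {v | ∃ u : Fin k → F, Y = X ᵥ* A + u ᵥ* B ∧ v = X ᵥ* C + u ᵥ* E}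

/-- The weight adjacency matrix of an encoder `G` (via its controller canonical form). -/
def wam {k n : ℕ} (G : Matrix (Fin k) (Fin n) (Polynomial F)) :
    Matrix (States F G → F) (States F G → F) (Polynomial ℂ) :=
  WAM F (matA F G) (matB F G) (matC F G) (matE F G)

/-- The block code `C_const = 𝓒 ∩ F^n` of constant codewords. -/
def constSet {k n : ℕ} (G : Matrix (Fin k) (Fin n) (Polynomial F)) : Set (Fin n → F) :=
  {w | (fun j => Polynomial.C (w j)) ∈ code F G}

/-- The block code `C_coeff` of coefficient vectors of codewords. -/
def coeffSet {k n : ℕ} (G : Matrix (Fin k) (Fin n) (Polynomial F)) : Set (Fin n → F) :=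
  {w | ∃ v ∈ code F G, ∃ t : ℕ, ∀ j, (v j).coeff t = w j}

/-- The dual of a block code. -/
def blockDual {n : ℕ} (S : Set (Fin n → F)) : Set (Fin n → F) :=
  {w | ∀ v ∈ S, w ⬝ᵥ v = 0}

/-- `Δ`: the set of state pairs `(X,Y)` admitting a transition `Y = XA + uB`. -/
def Delta {k n : ℕ} (G : Matrix (Fin k) (Fin n) (Polynomial F)) :
    Set ((States F G → F) × (States F G → F)) :=
  {p | ∃ u : Fin k → F, p.2 = p.1 ᵥ* matA F G + u ᵥ* matB F G}

/-- `Δ⁻ = {(0,Y) : Y ∈ im A}`. -/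
def DeltaMinus {k n : ℕ} (G : Matrix (Fin k) (Fin n) (Polynomial F)) :
    Set ((States F G → F) × (States F G → F)) :=
  {p | p.1 = 0 ∧ ∃ X : States F G → F, p.2 = X ᵥ* matA F G}

/-- `Ω = {(X,Y) ∈ Δ : XC + Y Bᵀ E ∈ C_const}`. -/
def Omega {k n : ℕ} (G : Matrix (Fin k) (Fin n) (Polynomial F)) :
    Set ((States F G → F) × (States F G → F)) :=
  {p | p ∈ Delta F G ∧
    p.1 ᵥ* matC F G + (p.2 ᵥ* (matB F G)ᵀ) ᵥ* matE F G ∈ constSet F G}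

/-- Orthogonal of a set of state pairs with respect to the standard bilinear form on `F^{2δ}`. -/
def pairPerp {σ : Type} [Fintype σ] (S : Set ((σ → F) × (σ → F))) :
    Set ((σ → F) × (σ → F)) :=
  {p | ∀ s ∈ S, p.1 ⬝ᵥ s.1 + p.2 ⬝ᵥ s.2 = 0}

/-- `S_0 = Bᵀ E` and `S_i = Bᵀ B A^{i-1} C` for `i ≥ 1`. -/
def Smat {k n : ℕ} (d : Fin k → ℕ) (G : Matrix (Fin k) (Fin n) (Polynomial F)) :
    ℕ → Matrix (StateIdx k d) (Fin n) F
  | 0 => (ccfB F d)ᵀ * ccfE F G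
  | (i + 1) => (ccfB F d)ᵀ * ccfB F d * ccfA F d ^ i * ccfC F d G

def Sm {k n : ℕ} (G : Matrix (Fin k) (Fin n) (Polynomial F)) :
    ℕ → Matrix (States F G) (Fin n) F := Smat F (rowDeg F G) G

/-- The matrix `N = ∑_{m≥2} ∑_{i=1}^{m-1} ∑_{j=0}^{i-1} (Âᵀ)^{i-1} Ŝ_j S_{m-j}ᵀ A^{m-(i+1)}`
(all summands with `m ≥ δ + δ̂` vanish, so the sum is truncated there). -/
def Nm {k kb n : ℕ} (G : Matrix (Fin k) (Fin n) (Polynomial F))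
    (Gh : Matrix (Fin kb) (Fin n) (Polynomial F)) :
    Matrix (States F Gh) (States F G) F :=
  ∑ m ∈ Finset.Icc 2 (Fintype.card (States F G) + Fintype.card (States F Gh)),
    ∑ i ∈ Finset.Icc 1 (m - 1), ∑ j ∈ Finset.range i,
      (matA F Gh)ᵀ ^ (i - 1) * Sm F Gh j * (Sm F G (m - j))ᵀ * matA F G ^ (m - (i + 1))

/-- The reciprocal matrix `G' = diag(D^{δ_1},…,D^{δ_k}) · G(D⁻¹)`. -/
def recip {k n : ℕ} (G : Matrix (Fin k) (Fin n) (Polynomial F)) :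
    Matrix (Fin k) (Fin n) (Polynomial F) :=
  Matrix.of fun i j => (G i j).reflect (rowDeg F G i)

/-- The block diagonal matrix `R` whose blocks are the anti-identity matrices. -/
def Rmat {k : ℕ} (d : Fin k → ℕ) : Matrix (StateIdx k d) (StateIdx k d) F :=
  Matrix.of fun s t => if s.1 = t.1 ∧ (s.2 : ℕ) + (t.2 : ℕ) + 1 = d s.1 then 1 else 0

/-- The MacWilliams matrix `𝓗 = q^{-δ/2} (ζ^{τ(X Yᵀ)})_{X,Y}`. -/
def macH (σ : Type) [Fintype σ] (p : ℕ) [Algebra (ZMod p) F] (ζ : ℂ) :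
    Matrix (σ → F) (σ → F) ℂ :=
  Matrix.of fun X Y =>
    (((Real.sqrt (Fintype.card F) : ℝ) : ℂ))⁻¹ ^ Fintype.card σ *
      ζ ^ (Algebra.trace (ZMod p) F (X ⬝ᵥ Y)).val

/-- The MacWilliams transform `H(f)(W) = (1+(q-1)W)^n f((1-W)/(1+(q-1)W))`
on polynomials of degree at most `n`. -/
def macWT (q n : ℕ) (f : Polynomial ℂ) : Polynomial ℂ :=
  ∑ j ∈ Finset.range (n + 1),
    Polynomial.C (f.coeff j) * (1 - Polynomial.X) ^ j *
      (1 + Polynomial.C ((q : ℂ) - 1) * Polynomial.X) ^ (n - j)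


namespace CCAux
variable {F}

theorem coeff_mul_of_le {p q : (Polynomial F)} {a b : ℕ} (hp : p.natDegree ≤ a)
    (hq : q.natDegree ≤ b) : (p*q).coeff (a+b) = p.coeff a * q.coeff b := by
  rw [coeff_mul]
  apply Finset.sum_eq_single (a, b)
  · rintro ⟨x,y⟩ hxy hne
    rw [Finset.HasAntidiagonal.mem_antidiagonal] at hxy
    rcases lt_or_ge a x with h | h
    · exact mul_eq_zero_of_left (coeff_eq_zero_of_natDegree_lt (lt_of_le_of_lt hp h)) _
    · have hxa : x ≠ a ∨ y ≠ b := by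
        by_contra hc; push_neg at hc; exact hne (by simp [Prod.ext_iff, hc.1, hc.2])
      have : b < y := by simp only at hxy; omega
      exact mul_eq_zero_of_right _ (coeff_eq_zero_of_natDegree_lt (lt_of_le_of_lt hq this))
  · intro h; simp at h

theorem coeff_prod_of_le {ι : Type*} (s : Finset ι) (f : ι → Polynomial F) (d : ι → ℕ)
    (h : ∀ i ∈ s, (f i).natDegree ≤ d i) :
    (∏ i ∈ s, f i).coeff (∑ i ∈ s, d i) = ∏ i ∈ s, (f i).coeff (d i) := by
  classical
  induction s using Finset.induction_on with
  | empty => simp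
  | @insert a s ha ih =>
    have h1 : (f a).natDegree ≤ d a := h a (Finset.mem_insert_self a s)
    have h2 : (∏ i ∈ s, f i).natDegree ≤ ∑ i ∈ s, d i :=
      (Polynomial.natDegree_prod_le _ _).trans
        (Finset.sum_le_sum fun i hi => h i (Finset.mem_insert_of_mem hi))
    rw [Finset.prod_insert ha, Finset.sum_insert ha, Finset.prod_insert ha,
      coeff_mul_of_le h1 h2, ih fun i hi => h i (Finset.mem_insert_of_mem hi)]

theorem natDegree_G_le {k n : ℕ} (G : Matrix (Fin k) (Fin n) (Polynomial F)) (i : Fin k)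
    (j : Fin n) : (G i j).natDegree ≤ rowDeg F G i :=
  Finset.le_sup (f := fun j => (G i j).natDegree) (Finset.mem_univ j)

theorem row_const {k n : ℕ} (G : Matrix (Fin k) (Fin n) (Polynomial F)) {i : Fin k}
    (h : rowDeg F G i = 0) (j : Fin n) : G i j = Polynomial.C ((G i j).coeff 0) :=
  Polynomial.eq_C_of_natDegree_eq_zero (Nat.le_zero.mp (h ▸ natDegree_G_le G i j))

theorem vecMul_apply {m l : ℕ} {R : Type*} [CommRing R] (v : Fin m → R)
    (M : Matrix (Fin m) (Fin l) R) (j : Fin l) : (v ᵥ* M) j = ∑ i, v i * M i j := by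
  simp [Matrix.vecMul, dotProduct]

/-- the high-order coefficient matrix -/
def Ginf {k n : ℕ} (G : Matrix (Fin k) (Fin n) (Polynomial F)) : Matrix (Fin k) (Fin n) F :=
  Matrix.of fun i j => (G i j).coeff (rowDeg F G i)

theorem rows_indep_E {k n : ℕ} {G : Matrix (Fin k) (Fin n) (Polynomial F)}
    (hG : IsBasic F G) (a : Fin k → F)
    (h : (a ᵥ* (Matrix.of fun i j => (G i j).coeff 0)) = 0) : a = 0 := by
  obtain ⟨H, hH⟩ := hG
  have key : (Matrix.of fun i j => (G i j).coeff 0) * (Matrix.of fun j l => (H j l).coeff 0)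
      = (1 : Matrix (Fin k) (Fin k) F) := by
    ext i l
    have := congrFun (congrFun (congrArg (fun M => fun i l => ((M : Matrix _ _ (Polynomial F)) i l).coeff 0) hH) i) l
    simp only [Matrix.mul_apply, Polynomial.finset_sum_coeff, Polynomial.mul_coeff_zero,
      Matrix.of_apply] at this ⊢
    rw [this]
    by_cases hil : i = l <;> simp [Matrix.one_apply, hil]
  have := congrArg (fun w => w ᵥ* (Matrix.of fun j l => (H j l).coeff 0)) h
  simpa [Matrix.vecMul_vecMul, key] using this
theorem det_expand {k n : ℕ} (G : Matrix (Fin k) (Fin n) (Polynomial F)) (f : Fin k ↪ Fin n) :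
    (G.submatrix id f).det.natDegree ≤ ∑ i, rowDeg F G i ∧
    (G.submatrix id f).det.coeff (∑ i, rowDeg F G i) = ((Ginf G).submatrix id f).det := by
  have key : ∀ σ : Equiv.Perm (Fin k),
      (∏ i, G (σ i) (f i)).natDegree ≤ ∑ i, rowDeg F G i ∧
      (∏ i, G (σ i) (f i)).coeff (∑ i, rowDeg F G i) = ∏ i, (Ginf G) (σ i) (f i) := by
    intro σ
    have hsum : ∑ i, rowDeg F G (σ i) = ∑ i, rowDeg F G i := Equiv.sum_comp σ _
    constructor
    · exact (Polynomial.natDegree_prod_le _ _).trans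
        (hsum ▸ Finset.sum_le_sum fun i _ => natDegree_G_le G (σ i) (f i))
    · rw [← hsum, coeff_prod_of_le _ _ _ fun i _ => natDegree_G_le G (σ i) (f i)]
      rfl
  constructor
  · rw [Matrix.det_apply]
    refine Polynomial.natDegree_sum_le_of_forall_le _ _ fun σ _ => ?_
    rw [Units.smul_def]
    rcases Int.units_eq_one_or (Equiv.Perm.sign σ) with h | h <;>
      simp only [h, Units.val_one, Units.val_neg, one_smul, neg_smul, one_zsmul,
        neg_zsmul, natDegree_neg] <;>
      simpa using (key σ).1
  · rw [Matrix.det_apply, Matrix.det_apply, Polynomial.finset_sum_coeff]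
    refine Finset.sum_congr rfl fun σ _ => ?_
    rw [Units.smul_def, Units.smul_def]
    rcases Int.units_eq_one_or (Equiv.Perm.sign σ) with h | h <;>
      simp only [h, Units.val_one, Units.val_neg, one_zsmul, neg_zsmul, coeff_neg, neg_inj] <;>
      simpa using (key σ).2

theorem rows_indep_Ginf {k n : ℕ} {G : Matrix (Fin k) (Fin n) (Polynomial F)} (hkn : k ≤ n)
    (hG : IsMinimalEncoder F G) (a : Fin k → F) (h : a ᵥ* Ginf G = 0) : a = 0 := by
  by_cases hS : ∑ i, rowDeg F G i = 0
  · refine rows_indep_E hG.1 a ?_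
    have hC : ∀ i j, (Ginf G) i j = (G i j).coeff 0 := fun i j => by
      have h0 : rowDeg F G i = 0 := Finset.sum_eq_zero_iff.mp hS i (Finset.mem_univ i)
      simp [Ginf, h0]
    ext j
    have hj := congrFun h j
    rw [vecMul_apply, Pi.zero_apply] at hj
    rw [vecMul_apply, Pi.zero_apply, ← hj]
    exact Finset.sum_congr rfl fun i _ => by rw [Matrix.of_apply, hC i j]
  · have hne : Nonempty (Fin k ↪ Fin n) := ⟨Fin.castLEEmb hkn⟩
    obtain ⟨f, -, hf⟩ := Finset.exists_mem_eq_sup Finset.univ Finset.univ_nonempty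
      (fun f : Fin k ↪ Fin n => ((G.submatrix id f).det).natDegree)
    have hdeg : ((G.submatrix id f).det).natDegree = ∑ i, rowDeg F G i := by
      rw [hG.2]; exact hf.symm
    have hne0 : (G.submatrix id f).det ≠ 0 := by
      intro h0; rw [h0, Polynomial.natDegree_zero] at hdeg; exact hS hdeg.symm
    have hGinf : ((Ginf G).submatrix id f).det ≠ 0 := by
      rw [← (det_expand G f).2, ← hdeg]
      exact Polynomial.leadingCoeff_ne_zero.mpr hne0
    have hsub : a ᵥ* ((Ginf G).submatrix id f) = 0 := by
      ext j
      have hj := congrFun h (f j)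
      rw [vecMul_apply, Pi.zero_apply] at hj
      rw [vecMul_apply, Pi.zero_apply, ← hj]
      exact Finset.sum_congr rfl fun i _ => rfl
    have h2 := congrArg (fun w => w ᵥ* ((Ginf G).submatrix id f)⁻¹) hsub
    simpa [Matrix.vecMul_vecMul, Matrix.mul_nonsing_inv _ (Ne.isUnit hGinf)] using h2


section CCF
variable {k n : ℕ} (G : Matrix (Fin k) (Fin n) (Polynomial F))

theorem vecMul_apply' {m l : Type*} [Fintype m] {R : Type*} [CommRing R] (v : m → R)
    (M : Matrix m l R) (j : l) : (v ᵥ* M) j = ∑ i, v i * M i j := by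
  simp [Matrix.vecMul, dotProduct]

theorem vecMul_matA_succ (X : States F G → F) (i : Fin k) (ν : ℕ)
    (h : ν + 1 < rowDeg F G i) :
    (X ᵥ* matA F G) ⟨i, ⟨ν+1, h⟩⟩ = X ⟨i, ⟨ν, by omega⟩⟩ := by
  rw [vecMul_apply']
  rw [Finset.sum_eq_single (⟨i, ⟨ν, by omega⟩⟩ : States F G)]
  · simp [matA, ccfA]
  · rintro ⟨a, μ⟩ - hne
    simp only [matA, ccfA, Matrix.of_apply, mul_ite, mul_one, mul_zero]
    rw [if_neg]
    rintro ⟨h1, h2⟩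
    apply hne
    subst h1
    congr 1
    exact Fin.ext (by simpa using h2)
  · intro h; exact absurd (Finset.mem_univ _) h

theorem vecMul_matA_zero (X : States F G → F) (i : Fin k) (h : 0 < rowDeg F G i) :
    (X ᵥ* matA F G) ⟨i, ⟨0, h⟩⟩ = 0 := by
  rw [vecMul_apply']
  refine Finset.sum_eq_zero fun s _ => ?_
  simp only [matA, ccfA, Matrix.of_apply, mul_ite, mul_one, mul_zero]
  rw [if_neg]
  rintro ⟨-, h2⟩
  simp at h2

theorem vecMul_matB (u : Fin k → F) (s : States F G) :
    (u ᵥ* matB F G) s = if (s.2 : ℕ) = 0 then u s.1 else 0 := by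
  rw [vecMul_apply']
  rw [Finset.sum_eq_single s.1]
  · simp [matB, ccfB]
  · intro b _ hne
    simp only [matB, ccfB, Matrix.of_apply, mul_ite, mul_one, mul_zero]
    rw [if_neg]
    rintro ⟨h1, -⟩
    exact hne h1.symm
  · intro h; exact absurd (Finset.mem_univ _) h

theorem vecMul_matBt (Y : States F G → F) (i : Fin k) :
    (Y ᵥ* (matB F G)ᵀ) i = if h : 0 < rowDeg F G i then Y ⟨i, ⟨0, h⟩⟩ else 0 := by
  rw [vecMul_apply']
  split_ifs with h
  · rw [Finset.sum_eq_single (⟨i, ⟨0, h⟩⟩ : States F G)]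
    · simp [matB, ccfB]
    · rintro ⟨a, μ⟩ - hne
      simp only [matB, ccfB, Matrix.transpose_apply, Matrix.of_apply, mul_ite, mul_one, mul_zero]
      rw [if_neg]
      rintro ⟨h1, h2⟩
      apply hne
      subst h1
      congr 1
      exact Fin.ext (by simpa using h2)
    · intro h'; exact absurd (Finset.mem_univ _) h'
  · refine Finset.sum_eq_zero fun s _ => ?_
    simp only [matB, ccfB, Matrix.transpose_apply, Matrix.of_apply, mul_ite, mul_one, mul_zero]
    rw [if_neg]
    rintro ⟨h1, -⟩
    rw [← h1] at h
    exact h s.2.pos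

/-- the shift condition characterizing `Δ`. -/
def Cshift (X Y : States F G → F) : Prop :=
  ∀ (i : Fin k) (ν : ℕ) (h : ν + 1 < rowDeg F G i), Y ⟨i, ⟨ν+1, h⟩⟩ = X ⟨i, ⟨ν, by omega⟩⟩

theorem delta_iff (X Y : States F G → F) :
    (X, Y) ∈ Delta F G ↔ Cshift G X Y := by
  constructor
  · rintro ⟨u, hu⟩ i ν h
    have hu' : Y = X ᵥ* matA F G + u ᵥ* matB F G := hu
    rw [hu']
    simp only [Pi.add_apply]
    rw [vecMul_matA_succ G X i ν h, vecMul_matB]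
    simp
  · intro hsh
    refine ⟨fun i => if h : 0 < rowDeg F G i then Y ⟨i, ⟨0, h⟩⟩ else 0, ?_⟩
    funext s
    obtain ⟨i, ⟨μ, hμ⟩⟩ := s
    simp only [Pi.add_apply]
    rw [vecMul_matB]
    cases μ with
    | zero =>
      rw [vecMul_matA_zero G X i hμ]
      simp [dif_pos hμ]
    | succ ν =>
      rw [vecMul_matA_succ G X i ν hμ, hsh i ν hμ]
      simp

theorem constSet_of_supp (a : Fin k → F) (ha : ∀ i, rowDeg F G i ≠ 0 → a i = 0) :
    a ᵥ* matE F G ∈ constSet F G := by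
  refine ⟨fun i => Polynomial.C (a i), ?_⟩
  funext j
  show ((fun i => Polynomial.C (a i)) ᵥ* G) j = Polynomial.C ((a ᵥ* matE F G) j)
  rw [vecMul_apply', vecMul_apply' a]
  have key : ∀ i : Fin k, Polynomial.C (a i) * G i j = Polynomial.C (a i * matE F G i j) := by
    intro i
    by_cases h : rowDeg F G i = 0
    · rw [row_const G h j, ← Polynomial.C_mul]; rfl
    · rw [ha i h]; simp
  rw [Finset.sum_congr rfl fun i _ => key i, ← map_sum]

theorem constSet_supp (hkn : k ≤ n) (hG : IsMinimalEncoder F G) (w : Fin n → F)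
    (hw : w ∈ constSet F G) :
    ∃ a : Fin k → F, (∀ i, rowDeg F G i ≠ 0 → a i = 0) ∧ w = a ᵥ* matE F G := by
  obtain ⟨u, hu⟩ := hw
  by_cases hT : (Finset.univ.filter (fun i => u i ≠ 0)).Nonempty
  case neg =>
    refine ⟨0, fun i _ => rfl, ?_⟩
    have hu0 : u = 0 := by
      funext i
      by_contra hne
      exact hT ⟨i, Finset.mem_filter.mpr ⟨Finset.mem_univ i, hne⟩⟩
    funext j
    have hj := congrFun hu j
    rw [hu0] at hj
    simp only [Matrix.zero_vecMul, Pi.zero_apply] at hj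
    have : w j = 0 := by
      have := congrArg (fun p => Polynomial.coeff p 0) hj
      simpa using this.symm
    simp [this]
  case pos =>
    set T := Finset.univ.filter (fun i => u i ≠ 0) with hTdef
    set m := T.sup (fun i => (u i).natDegree + rowDeg F G i) with hmdef
    obtain ⟨i₀, hi₀T, hi₀⟩ := Finset.exists_mem_eq_sup T hT (fun i => (u i).natDegree + rowDeg F G i)
    by_cases hm0 : m = 0
    · refine ⟨fun i => (u i).coeff 0, ?_, ?_⟩
      · intro i hi
        by_cases hui : u i = 0
        · simp [hui]
        · exfalso
          have hmem : i ∈ T := Finset.mem_filter.mpr ⟨Finset.mem_univ i, hui⟩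
          have := Finset.le_sup (f := fun i => (u i).natDegree + rowDeg F G i) hmem
          rw [← hmdef, hm0] at this
          exact hi (Nat.eq_zero_of_le_zero (le_trans (Nat.le_add_left _ _) this))
      · funext j
        have hj := congrFun hu j
        have := congrArg (fun p => Polynomial.coeff p 0) hj
        simp only [vecMul_apply', Polynomial.finset_sum_coeff, Polynomial.mul_coeff_zero,
          Polynomial.coeff_C_zero] at this ⊢
        rw [← this]
        rfl
    · exfalso
      set c := fun i => if (u i).natDegree + rowDeg F G i = m then (u i).leadingCoeff else 0
        with hcdef
      have hc : c ᵥ* Ginf G = 0 := by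
        funext j
        rw [vecMul_apply', Pi.zero_apply]
        have hj := congrFun hu j
        have hcm := congrArg (fun p => Polynomial.coeff p m) hj
        simp only [vecMul_apply', Polynomial.finset_sum_coeff] at hcm
        rw [Polynomial.coeff_C, if_neg hm0] at hcm
        rw [← hcm]
        refine Finset.sum_congr rfl fun i _ => ?_
        by_cases hui : u i = 0
        · simp [hui, hcdef, Polynomial.leadingCoeff_zero]
        · have hmem : i ∈ T := Finset.mem_filter.mpr ⟨Finset.mem_univ i, hui⟩
          have hle : (u i).natDegree + rowDeg F G i ≤ m :=
            Finset.le_sup (f := fun i => (u i).natDegree + rowDeg F G i) hmem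
          by_cases heq : (u i).natDegree + rowDeg F G i = m
          · rw [← heq, coeff_mul_of_le (le_refl _) (natDegree_G_le G i j)]
            simp only [hcdef, if_pos heq]
            rfl
          · have hlt : (u i * G i j).natDegree < m :=
              lt_of_le_of_lt ((Polynomial.natDegree_mul_le).trans
                (Nat.add_le_add_left (natDegree_G_le G i j) _)) (by omega)
            rw [Polynomial.coeff_eq_zero_of_natDegree_lt hlt]
            simp [hcdef, if_neg heq]
      have := congrFun (rows_indep_Ginf hkn hG c hc) i₀
      simp only [Pi.zero_apply, hcdef] at this
      rw [if_pos hi₀.symm] at this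
      exact (Polynomial.leadingCoeff_ne_zero.mpr
        (Finset.mem_filter.mp hi₀T).2) this

end CCF


section OmegaLemmas
variable {k n : ℕ} (G : Matrix (Fin k) (Fin n) (Polynomial F))

theorem constSet_add {v w : Fin n → F} (hv : v ∈ constSet F G) (hw : w ∈ constSet F G) :
    v + w ∈ constSet F G := by
  obtain ⟨u1, h1⟩ := hv
  obtain ⟨u2, h2⟩ := hw
  refine ⟨u1 + u2, ?_⟩
  show (u1 + u2) ᵥ* G = fun j => Polynomial.C ((v + w) j)
  rw [Matrix.add_vecMul]
  funext j
  have e1 : (u1 ᵥ* G) j = Polynomial.C (v j) := congrFun h1 j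
  have e2 : (u2 ᵥ* G) j = Polynomial.C (w j) := congrFun h2 j
  simp [e1, e2]

theorem constSet_smul (c : F) {w : Fin n → F} (hw : w ∈ constSet F G) :
    c • w ∈ constSet F G := by
  obtain ⟨u1, h1⟩ := hw
  refine ⟨Polynomial.C c • u1, ?_⟩
  show (Polynomial.C c • u1) ᵥ* G = fun j => Polynomial.C ((c • w) j)
  rw [Matrix.smul_vecMul]
  funext j
  have e1 : (u1 ᵥ* G) j = Polynomial.C (w j) := congrFun h1 j
  simp [e1]

theorem omega_add {p q : (States F G → F) × (States F G → F)} (hp : p ∈ Omega F G)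
    (hq : q ∈ Omega F G) : p + q ∈ Omega F G := by
  obtain ⟨⟨u1, h1⟩, hc1⟩ := hp
  obtain ⟨⟨u2, h2⟩, hc2⟩ := hq
  constructor
  · refine ⟨u1 + u2, ?_⟩
    show p.2 + q.2 = (p.1 + q.1) ᵥ* matA F G + (u1 + u2) ᵥ* matB F G
    rw [Matrix.add_vecMul, Matrix.add_vecMul, h1, h2]
    abel
  · show (p.1 + q.1) ᵥ* matC F G + ((p.2 + q.2) ᵥ* (matB F G)ᵀ) ᵥ* matE F G ∈ constSet F G
    rw [Matrix.add_vecMul, Matrix.add_vecMul, Matrix.add_vecMul]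
    have : p.1 ᵥ* matC F G + q.1 ᵥ* matC F G +
        ((p.2 ᵥ* (matB F G)ᵀ) ᵥ* matE F G + (q.2 ᵥ* (matB F G)ᵀ) ᵥ* matE F G) =
        (p.1 ᵥ* matC F G + (p.2 ᵥ* (matB F G)ᵀ) ᵥ* matE F G) +
        (q.1 ᵥ* matC F G + (q.2 ᵥ* (matB F G)ᵀ) ᵥ* matE F G) := by abel
    rw [this]
    exact constSet_add G hc1 hc2

theorem omega_smul (c : F) {p : (States F G → F) × (States F G → F)} (hp : p ∈ Omega F G) :
    c • p ∈ Omega F G := by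
  obtain ⟨⟨u1, h1⟩, hc1⟩ := hp
  constructor
  · refine ⟨c • u1, ?_⟩
    show c • p.2 = (c • p.1) ᵥ* matA F G + (c • u1) ᵥ* matB F G
    rw [Matrix.smul_vecMul, Matrix.smul_vecMul, h1]
    rw [smul_add]
  · show (c • p.1) ᵥ* matC F G + ((c • p.2) ᵥ* (matB F G)ᵀ) ᵥ* matE F G ∈ constSet F G
    rw [Matrix.smul_vecMul, Matrix.smul_vecMul, Matrix.smul_vecMul, ← smul_add]
    exact constSet_smul G c hc1

theorem omega_neg {p : (States F G → F) × (States F G → F)} (hp : p ∈ Omega F G) :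
    -p ∈ Omega F G := by
  have := omega_smul G (-1 : F) hp
  simpa using this

/-- the `Z`-part of the `C`-output, as a combination of rows of `Ginf`. -/
theorem vecMul_matC_of_cshift (Z : States F G → F)
    (hΔ : Cshift G Z (0 : States F G → F)) (j : Fin n) :
    (Z ᵥ* matC F G) j =
      ∑ i, (if h : 0 < rowDeg F G i then Z ⟨i, ⟨rowDeg F G i - 1, by omega⟩⟩ else 0)
        * Ginf G i j := by
  rw [vecMul_apply']
  rw [← Finset.univ_sigma_univ, Finset.sum_sigma]
  refine Finset.sum_congr rfl fun i _ => ?_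
  by_cases hdi : 0 < rowDeg F G i
  · rw [Finset.sum_eq_single (⟨rowDeg F G i - 1, by omega⟩ : Fin (rowDeg F G i))]
    · rw [dif_pos hdi]
      congr 1
      show (G i j).coeff ((rowDeg F G i - 1) + 1) = (G i j).coeff (rowDeg F G i)
      congr 1
      omega
    · intro ν _ hν
      have hlt : (ν : ℕ) + 1 < rowDeg F G i := by
        have h1 : (ν : ℕ) < rowDeg F G i := ν.2
        have h2 : (ν : ℕ) ≠ rowDeg F G i - 1 := fun hc => hν (Fin.ext hc)
        omega
      have hz := hΔ i (ν : ℕ) hlt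
      simp only [Pi.zero_apply, Fin.eta] at hz
      rw [← hz, zero_mul]
    · intro h; exact absurd (Finset.mem_univ _) h
  · rw [dif_neg hdi, zero_mul]
    have hz : rowDeg F G i = 0 := by omega
    apply Finset.sum_eq_zero
    intro ν _
    exact absurd ν.2 (by omega)

theorem omega_snd_zero (hkn : k ≤ n) (hG : IsMinimalEncoder F G) (Z : States F G → F)
    (h : ((Z, (0 : States F G → F))) ∈ Omega F G) : Z = 0 := by
  obtain ⟨hΔ, hconst⟩ := h
  rw [delta_iff] at hΔ
  have h0 : (((0 : States F G → F)) ᵥ* (matB F G)ᵀ) ᵥ* matE F G = 0 := by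
    rw [Matrix.zero_vecMul, Matrix.zero_vecMul]
  have hconst' : Z ᵥ* matC F G ∈ constSet F G := by
    have : (Z, (0 : States F G → F)).1 ᵥ* matC F G +
        ((Z, (0 : States F G → F)).2 ᵥ* (matB F G)ᵀ) ᵥ* matE F G = Z ᵥ* matC F G := by
      rw [show ((Z, (0 : States F G → F))).2 = (0 : States F G → F) from rfl, h0, add_zero]
    rw [← this]
    exact hconst
  obtain ⟨a, ha, haeq⟩ := constSet_supp G hkn hG _ hconst'
  set zb := fun i => if h : 0 < rowDeg F G i then Z ⟨i, ⟨rowDeg F G i - 1, by omega⟩⟩ else 0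
    with hzb
  have hdiff : (zb - a) ᵥ* Ginf G = 0 := by
    funext j
    rw [Matrix.sub_vecMul, Pi.sub_apply, Pi.zero_apply, sub_eq_zero]
    rw [vecMul_apply', vecMul_apply']
    rw [← vecMul_matC_of_cshift G Z hΔ j]
    rw [haeq, vecMul_apply']
    refine Finset.sum_congr rfl fun i _ => ?_
    by_cases hai : a i = 0
    · simp [hai]
    · have hdi : rowDeg F G i = 0 := by
        by_contra hne
        exact hai (ha i hne)
      congr 1
      show matE F G i j = Ginf G i j
      simp [matE, ccfE, Ginf, hdi]
  have hzba := rows_indep_Ginf hkn hG _ hdiff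
  have hzb0 : ∀ i, zb i = a i := fun i => by
    have := congrFun hzba i
    simp only [Pi.sub_apply, Pi.zero_apply, sub_eq_zero] at this
    exact this
  funext s
  obtain ⟨i, ⟨ν, hν⟩⟩ := s
  rcases Nat.lt_or_ge (ν + 1) (rowDeg F G i) with hlt | hge
  · have := hΔ i ν hlt
    simp only [Pi.zero_apply] at this
    rw [Pi.zero_apply, ← this]
  · have hν1 : ν = rowDeg F G i - 1 := by omega
    have hdi : 0 < rowDeg F G i := by omega
    have h1 : zb i = Z ⟨i, ⟨rowDeg F G i - 1, by omega⟩⟩ := dif_pos hdi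
    have h2 : a i = 0 := ha i (by omega)
    have := (hzb0 i).symm.trans h1
    rw [h2] at this
    subst hν1
    rw [Pi.zero_apply]
    exact this.symm

theorem omega_fst_zero (hkn : k ≤ n) (hG : IsMinimalEncoder F G) (W : States F G → F)
    (h : (((0 : States F G → F), W)) ∈ Omega F G) : W = 0 := by
  obtain ⟨⟨u, hu⟩, hconst⟩ := h
  have hW : W = u ᵥ* matB F G := by
    have : W = (0 : States F G → F) ᵥ* matA F G + u ᵥ* matB F G := hu
    rw [Matrix.zero_vecMul, zero_add] at this
    exact this
  have hconst' : (W ᵥ* (matB F G)ᵀ) ᵥ* matE F G ∈ constSet F G := by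
    have h0 : ((0 : States F G → F)) ᵥ* matC F G = 0 := Matrix.zero_vecMul _
    have heq : ((((0 : States F G → F), W)).1) ᵥ* matC F G +
        ((((0 : States F G → F), W)).2 ᵥ* (matB F G)ᵀ) ᵥ* matE F G
        = (W ᵥ* (matB F G)ᵀ) ᵥ* matE F G := by
      rw [show ((((0 : States F G → F), W))).1 = (0 : States F G → F) from rfl, h0, zero_add]
    rw [← heq]
    exact hconst
  obtain ⟨a, ha, haeq⟩ := constSet_supp G hkn hG _ hconst'
  have hdiff : ((W ᵥ* (matB F G)ᵀ) - a) ᵥ* (Matrix.of fun i j => (G i j).coeff 0) = 0 := by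
    funext j
    rw [Matrix.sub_vecMul, Pi.sub_apply, Pi.zero_apply, sub_eq_zero]
    have e1 : ((W ᵥ* (matB F G)ᵀ) ᵥ* (Matrix.of fun i j => (G i j).coeff 0)) j
        = ((W ᵥ* (matB F G)ᵀ) ᵥ* matE F G) j := rfl
    have e2 : (a ᵥ* (Matrix.of fun i j => (G i j).coeff 0)) j = (a ᵥ* matE F G) j := rfl
    rw [e1, e2, haeq]
  have := rows_indep_E hG.1 _ hdiff
  have hWa : ∀ i, (W ᵥ* (matB F G)ᵀ) i = a i := fun i => by
    have := congrFun this i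
    simp only [Pi.sub_apply, Pi.zero_apply, sub_eq_zero] at this
    exact this
  funext s
  obtain ⟨i, ⟨ν, hν⟩⟩ := s
  rw [hW, vecMul_matB, Pi.zero_apply]
  rcases Nat.eq_zero_or_pos ν with h0 | hpos
  · subst h0
    have hdi : 0 < rowDeg F G i := hν
    rw [if_pos rfl]
    have e3 := hWa i
    rw [vecMul_matBt, dif_pos hdi] at e3
    have ha0 : a i = 0 := ha i (by omega)
    rw [ha0] at e3
    have e4 : W ⟨i, ⟨0, hdi⟩⟩ = u i := by
      have e5 := congrFun hW ⟨i, ⟨0, hdi⟩⟩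
      rw [vecMul_matB] at e5
      simpa using e5
    rw [← e4, e3]
  · rw [if_neg]
    intro hc
    rw [show ((⟨i, ⟨ν, hν⟩⟩ : States F G).2 : ℕ) = ν from rfl] at hc
    omega

end OmegaLemmas


section Duality
variable {k kb n : ℕ} (G : Matrix (Fin k) (Fin n) (Polynomial F))
  (Gh : Matrix (Fin kb) (Fin n) (Polynomial F))

theorem row_mem_code (i : Fin k) : (fun j => G i j) ∈ code F G := by
  refine ⟨fun i' => if i' = i then 1 else 0, ?_⟩
  funext j
  show ((fun i' => if i' = i then (1 : Polynomial F) else 0) ᵥ* G) j = G i j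
  rw [vecMul_apply']
  rw [Finset.sum_eq_single i]
  · simp
  · intro b _ hne; simp [hne]
  · intro h; exact absurd (Finset.mem_univ _) h

theorem rows_orth (hdual : code F Gh = dualCode F (code F G)) (l : Fin kb) (i : Fin k) :
    ∑ j, Gh l j * G i j = 0 := by
  have hl : (fun j => Gh l j) ∈ dualCode F (code F G) := hdual ▸ row_mem_code Gh l
  exact hl _ (row_mem_code G i)

theorem orth_const_row (hdual : code F Gh = dualCode F (code F G)) (l : Fin kb)
    (hl : rowDeg F Gh l = 0) (i : Fin k) (t : ℕ) :
    ∑ j, (G i j).coeff t * matE F Gh l j = 0 := by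
  have h0 := rows_orth G Gh hdual l i
  have h1 : ∑ j, Polynomial.C (matE F Gh l j) * G i j = 0 := by
    rw [← h0]
    exact Finset.sum_congr rfl fun j _ => by
      rw [show matE F Gh l j = (Gh l j).coeff 0 from rfl, ← row_const Gh hl j]
  have := congrArg (fun p => Polynomial.coeff p t) h1
  simp only [Polynomial.finset_sum_coeff, Polynomial.coeff_C_mul, Polynomial.coeff_zero] at this
  rw [← this]
  exact Finset.sum_congr rfl fun j _ => mul_comm _ _

theorem E_mul_Eht (hdual : code F Gh = dualCode F (code F G)) :
    matE F G * (matE F Gh)ᵀ = 0 := by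
  ext i l
  have h0 := rows_orth G Gh hdual l i
  have := congrArg (fun p => Polynomial.coeff p 0) h0
  simp only [Polynomial.finset_sum_coeff, Polynomial.mul_coeff_zero, Polynomial.coeff_zero] at this
  rw [Matrix.mul_apply, Matrix.zero_apply, ← this]
  exact Finset.sum_congr rfl fun j _ => by rw [mul_comm]; rfl

theorem E_right_inv (hB : IsBasic F G) :
    ∃ E' : Matrix (Fin n) (Fin k) F, matE F G * E' = 1 := by
  obtain ⟨H, hH⟩ := hB
  refine ⟨Matrix.of fun j l => (H j l).coeff 0, ?_⟩
  ext i l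
  have := congrFun (congrFun (congrArg
    (fun M => fun i l => ((M : Matrix _ _ (Polynomial F)) i l).coeff 0) hH) i) l
  simp only [Matrix.mul_apply, Polynomial.finset_sum_coeff, Polynomial.mul_coeff_zero,
    Matrix.of_apply] at this ⊢
  show ∑ x, (G i x).coeff 0 * (H x l).coeff 0 = (1 : Matrix (Fin k) (Fin k) F) i l
  rw [this]
  by_cases hil : i = l <;> simp [Matrix.one_apply, hil]

theorem mem_rowspace (hkn : k + kb = n) (hB : IsBasic F G) (hBh : IsBasic F Gh)
    (hdual : code F Gh = dualCode F (code F G)) (w : Fin n → F)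
    (hw : w ᵥ* (matE F Gh)ᵀ = 0) : ∃ a : Fin k → F, w = a ᵥ* matE F G := by
  classical
  set φ := ((matE F Gh)ᵀ).vecMulLinear with hφ
  set ψ := (matE F G).vecMulLinear with hψ
  have hle : LinearMap.range ψ ≤ LinearMap.ker φ := by
    rintro _ ⟨a, rfl⟩
    show (a ᵥ* matE F G) ᵥ* (matE F Gh)ᵀ = 0
    rw [Matrix.vecMul_vecMul, E_mul_Eht G Gh hdual, Matrix.vecMul_zero]
  have hinj : Function.Injective ψ := by
    intro a b hab
    have : (a - b) ᵥ* matE F G = 0 := by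
      rw [Matrix.sub_vecMul]
      show ψ a - ψ b = 0
      rw [hab, sub_self]
    have := rows_indep_E hB _ this
    exact sub_eq_zero.mp this
  have hsurj : Function.Surjective φ := by
    intro c
    obtain ⟨E', hE'⟩ := E_right_inv Gh hBh
    refine ⟨c ᵥ* E'ᵀ, ?_⟩
    show (c ᵥ* E'ᵀ) ᵥ* (matE F Gh)ᵀ = c
    rw [Matrix.vecMul_vecMul, ← Matrix.transpose_mul, hE', Matrix.transpose_one,
      Matrix.vecMul_one]
  have hrange : LinearMap.range ψ = LinearMap.ker φ := by
    apply Submodule.eq_of_le_of_finrank_le hle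
    have h1 : Module.finrank F (LinearMap.range ψ) = k := by
      rw [LinearMap.finrank_range_of_inj hinj, Module.finrank_fintype_fun_eq_card,
        Fintype.card_fin]
    have h2 : Module.finrank F (LinearMap.ker φ) = k := by
      have hrn := LinearMap.finrank_range_add_finrank_ker φ
      rw [LinearMap.range_eq_top.mpr hsurj] at hrn
      rw [finrank_top, Module.finrank_fintype_fun_eq_card, Module.finrank_fintype_fun_eq_card,
        Fintype.card_fin, Fintype.card_fin] at hrn
      omega
    rw [h1, h2]
  have hwk : w ∈ LinearMap.ker φ := hw
  rw [← hrange] at hwk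
  obtain ⟨a, ha⟩ := hwk
  exact ⟨a, ha.symm⟩

theorem omega_exists (hkn : k + kb = n) (hG : IsMinimalEncoder F G)
    (hGh : IsMinimalEncoder F Gh) (hdual : code F Gh = dualCode F (code F G))
    (X : States F G → F)
    (hX : X ᵥ* (matC F G * (matE F Gh)ᵀ * matB F Gh) = 0) :
    ∃ Y : States F G → F, (X, Y) ∈ Omega F G := by
  have hv : (X ᵥ* matC F G) ᵥ* (matE F Gh)ᵀ = 0 := by
    funext l
    by_cases hdl : 0 < rowDeg F Gh l
    · have h1 := congrFun hX ⟨l, ⟨0, hdl⟩⟩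
      rw [← Matrix.vecMul_vecMul, ← Matrix.vecMul_vecMul] at h1
      rw [vecMul_matB] at h1
      simpa using h1
    · have hl0 : rowDeg F Gh l = 0 := by omega
      rw [Pi.zero_apply, vecMul_apply']
      have : ∀ j, (X ᵥ* matC F G) j * (matE F Gh)ᵀ j l
          = ∑ s : States F G, X s * ((G s.1 j).coeff ((s.2 : ℕ)+1) * matE F Gh l j) := by
        intro j
        rw [vecMul_apply', Finset.sum_mul]
        exact Finset.sum_congr rfl fun s _ => by
          rw [Matrix.transpose_apply, mul_assoc]; rfl
      rw [Finset.sum_congr rfl fun j _ => this j, Finset.sum_comm]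
      refine Finset.sum_eq_zero fun s _ => ?_
      rw [← Finset.mul_sum, orth_const_row G Gh hdual l hl0 s.1 ((s.2 : ℕ)+1), mul_zero]
  obtain ⟨avec, hav⟩ := mem_rowspace G Gh hkn hG.1 hGh.1 hdual _ hv
  refine ⟨fun s => if h : 0 < (s.2 : ℕ) then X ⟨s.1, ⟨(s.2 : ℕ) - 1, by omega⟩⟩
    else -avec s.1, ?_, ?_⟩
  · rw [delta_iff]
    intro i ν h
    beta_reduce
    rw [dif_pos (show 0 < ((⟨ν+1, h⟩ : Fin (rowDeg F G i)) : ℕ) from Nat.succ_pos ν)]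
    exact congrArg (fun m : Fin (rowDeg F G i) => X ⟨i, m⟩) (Fin.ext (by simp))
  · set Y := fun s : States F G => if h : 0 < (s.2 : ℕ) then
      X ⟨s.1, ⟨(s.2 : ℕ) - 1, by omega⟩⟩ else -avec s.1 with hY
    show X ᵥ* matC F G + (Y ᵥ* (matB F G)ᵀ) ᵥ* matE F G ∈ constSet F G
    have hYB : Y ᵥ* (matB F G)ᵀ = fun i => if h : 0 < rowDeg F G i then -avec i else 0 := by
      funext i
      rw [vecMul_matBt]
      by_cases h : 0 < rowDeg F G i
      · rw [dif_pos h, dif_pos h, hY]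
        simp
      · rw [dif_neg h, dif_neg h]
    rw [hYB, hav, ← Matrix.add_vecMul]
    apply constSet_of_supp
    intro i hi
    simp only [Pi.add_apply]
    rw [dif_pos (by omega : 0 < rowDeg F G i)]
    ring
end Duality


section Invariant
variable {k n : ℕ} (G : Matrix (Fin k) (Fin n) (Polynomial F))

theorem omega_inj_left (hkn : k ≤ n) (hG : IsMinimalEncoder F G)
    {X X' Y : States F G → F} (h1 : (X, Y) ∈ Omega F G) (h2 : (X', Y) ∈ Omega F G) :
    X = X' := by
  have hmem := omega_add G h1 (omega_neg G h2)
  have heq : (X, Y) + -(X', Y) = (X - X', Y - Y) := by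
    simp [Prod.ext_iff, sub_eq_add_neg]
  rw [heq, sub_self] at hmem
  have := omega_snd_zero G hkn hG _ hmem
  exact sub_eq_zero.mp this

theorem omega_inj_right (hkn : k ≤ n) (hG : IsMinimalEncoder F G)
    {X Y Y' : States F G → F} (h1 : (X, Y) ∈ Omega F G) (h2 : (X, Y') ∈ Omega F G) :
    Y = Y' := by
  have hmem := omega_add G h1 (omega_neg G h2)
  have heq : (X, Y) + -(X, Y') = (X - X, Y - Y') := by
    simp [Prod.ext_iff, sub_eq_add_neg]
  rw [heq, sub_self] at hmem
  have := omega_fst_zero G hkn hG _ hmem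
  exact sub_eq_zero.mp this

theorem invariant_zero (hkn : k ≤ n) (hG : IsMinimalEncoder F G)
    (x : ℕ → States F G → F) (hx : ∀ t, (x t, x (t+1)) ∈ Omega F G) : x 0 = 0 := by
  classical
  -- full periodicity
  obtain ⟨a₀, b₀, hne, hab⟩ := Finite.exists_ne_map_eq_of_infinite x
  have hwlog : ∃ a b : ℕ, a < b ∧ x a = x b := by
    rcases lt_trichotomy a₀ b₀ with h | h | h
    · exact ⟨a₀, b₀, h, hab⟩
    · exact absurd h hne
    · exact ⟨b₀, a₀, h, hab.symm⟩
  obtain ⟨a, b, hab', hxab⟩ := hwlog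
  set p := b - a with hp
  have hppos : 0 < p := by rw [hp]; omega
  have back : ∀ s, x (a - s) = x (a - s + p) := by
    intro s
    induction s with
    | zero =>
      rw [Nat.sub_zero, show a + p = b from by omega]
      exact hxab
    | succ s ih =>
      by_cases h0 : a - s = 0
      · rw [show a - (s+1) = 0 from by omega]
        rw [h0] at ih
        exact ih
      · have h2 : a - s = (a - (s+1)) + 1 := by omega
        set t := a - (s+1) with ht
        rw [h2] at ih
        have h3 := hx (t + p)
        rw [show t + p + 1 = t + 1 + p from by omega, ← ih] at h3
        exact omega_inj_left G hkn hG (hx t) h3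
  have h0p : x 0 = x p := by
    have := back a
    rw [Nat.sub_self, Nat.zero_add] at this
    exact this
  have per : ∀ t, x t = x (t + p) := by
    intro t
    induction t with
    | zero => rw [Nat.zero_add]; exact h0p
    | succ t ih =>
      have h3 := hx (t + p)
      rw [← ih] at h3
      have h4 := omega_inj_right G hkn hG (hx t) h3
      rw [show t + 1 + p = t + p + 1 from by omega]
      exact h4
  have perM : ∀ M, x 0 = x (M * p) := by
    intro M
    induction M with
    | zero => simp
    | succ M ih =>
      rw [ih, per (M * p)]
      congr 1
      ring
  -- inputs
  set u : ℕ → Fin k → F := fun t i => if h : 0 < rowDeg F G i then x (t+1) ⟨i, ⟨0, h⟩⟩ else 0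
    with hu
  have hw : ∀ t, x t ᵥ* matC F G + u t ᵥ* matE F G ∈ constSet F G := by
    intro t
    have h1 := (hx t).2
    have h2 : x (t+1) ᵥ* (matB F G)ᵀ = u t := by
      funext i
      rw [vecMul_matBt]
    rw [show ((x t, x (t+1))).2 = x (t+1) from rfl, h2] at h1
    exact h1
  choose av hav_supp hav_eq using fun t => constSet_supp G hkn hG _ (hw t)
  -- shift structure
  have SH : ∀ (ν : ℕ) (i : Fin k) (hν : ν < rowDeg F G i) (t : ℕ),
      x (t + ν + 1) ⟨i, ⟨ν, hν⟩⟩ = u t i := by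
    intro ν
    induction ν with
    | zero =>
      intro i hν t
      rw [hu]
      beta_reduce
      rw [dif_pos hν]
    | succ ν ih =>
      intro i hν t
      have hc := (delta_iff G _ _).mp (hx (t+ν+1)).1 i ν hν
      rw [show t + (ν+1) + 1 = (t + ν + 1) + 1 from by omega, hc]
      exact ih i _ t
  -- bounds
  obtain ⟨H, hH⟩ := hG.1
  set dm := Finset.univ.sup (rowDeg F G) with hdm
  set DH := Finset.univ.sup (fun jl : Fin n × Fin k => (H jl.1 jl.2).natDegree) with hDH
  have hdm_le : ∀ i, rowDeg F G i ≤ dm := fun i => Finset.le_sup (Finset.mem_univ i)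
  have hDH_le : ∀ j l, (H j l).natDegree ≤ DH := fun j l =>
    Finset.le_sup (f := fun jl : Fin n × Fin k => (H jl.1 jl.2).natDegree)
      (Finset.mem_univ (j, l))
  -- core claim
  have core : ∀ (t : ℕ) (l : Fin k), dm + DH ≤ t → 0 < rowDeg F G l → u t l = 0 := by
    intro t l htle hdl
    set N := t + 1 with hN
    set U : Fin k → Polynomial F :=
      fun i => ∑ s ∈ Finset.range N, Polynomial.C (u s i) * Polynomial.X ^ s with hU
    set W : Fin n → Polynomial F := fun j => ∑ s ∈ Finset.range N,
      Polynomial.C ((x s ᵥ* matC F G + u s ᵥ* matE F G) j) * Polynomial.X ^ s with hW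
    have hUco : ∀ i r, (U i).coeff r = if r < N then u r i else 0 := by
      intro i r
      rw [hU]
      beta_reduce
      rw [Polynomial.finset_sum_coeff]
      simp only [Polynomial.coeff_C_mul, Polynomial.coeff_X_pow, mul_ite, mul_one, mul_zero]
      rw [Finset.sum_ite_eq (Finset.range N) r (fun s => u s i)]
      simp [Finset.mem_range]
    have hWco : ∀ j r, (W j).coeff r =
        if r < N then (x r ᵥ* matC F G + u r ᵥ* matE F G) j else 0 := by
      intro j r
      rw [hW]
      beta_reduce
      rw [Polynomial.finset_sum_coeff]
      simp only [Polynomial.coeff_C_mul, Polynomial.coeff_X_pow, mul_ite, mul_one, mul_zero]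
      rw [Finset.sum_ite_eq (Finset.range N) r
        (fun s => (x s ᵥ* matC F G + u s ᵥ* matE F G) j)]
      simp [Finset.mem_range]
    have MID : ∀ r, dm ≤ r → r < N → ∀ j,
        ((U ᵥ* G) j).coeff r = (x r ᵥ* matC F G + u r ᵥ* matE F G) j := by
      intro r hrdm hrN j
      rw [vecMul_apply', Polynomial.finset_sum_coeff]
      have per : ∀ i : Fin k, (U i * G i j).coeff r
          = ∑ μ ∈ Finset.range (dm + 1), (G i j).coeff μ * u (r - μ) i := by
        intro i
        rw [mul_comm, Polynomial.coeff_mul,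
          Finset.Nat.sum_antidiagonal_eq_sum_range_succ_mk]
        have e1 : ∑ μ ∈ Finset.range (dm+1), (G i j).coeff μ * (U i).coeff (r - μ)
            = ∑ μ ∈ Finset.range (r+1), (G i j).coeff μ * (U i).coeff (r - μ) :=
          Finset.sum_subset (Finset.range_subset_range.mpr (by omega)) (fun μ hμ1 hμ2 => by
            rw [Finset.mem_range] at hμ1 hμ2
            have h3 : dm < μ := by omega
            rw [Polynomial.coeff_eq_zero_of_natDegree_lt
              (lt_of_le_of_lt ((natDegree_G_le G i j).trans (hdm_le i)) h3), zero_mul])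
        rw [← e1]
        refine Finset.sum_congr rfl fun μ hμ => ?_
        rw [Finset.mem_range] at hμ
        rw [hUco i (r - μ), if_pos (by omega)]
      rw [Finset.sum_congr rfl fun i _ => per i]
      rw [Pi.add_apply, vecMul_apply', vecMul_apply']
      have expand : ∀ i : Fin k, ∑ μ ∈ Finset.range (dm + 1), (G i j).coeff μ * u (r - μ) i
          = (∑ ν ∈ Finset.range dm, (G i j).coeff (ν+1) * u (r - (ν+1)) i)
            + (G i j).coeff 0 * u (r - 0) i := fun i =>
        Finset.sum_range_succ' (fun μ => (G i j).coeff μ * u (r - μ) i) dm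
      rw [Finset.sum_congr rfl fun i _ => expand i, Finset.sum_add_distrib]
      congr 1
      · rw [← Finset.univ_sigma_univ, Finset.sum_sigma]
        refine Finset.sum_congr rfl fun i _ => ?_
        rw [Finset.sum_fin_eq_sum_range]
        have e2 : ∑ ν ∈ Finset.range (rowDeg F G i),
            (if h : ν < rowDeg F G i then
              x r ⟨i, ⟨ν, h⟩⟩ * matC F G ⟨i, ⟨ν, h⟩⟩ j else 0)
            = ∑ ν ∈ Finset.range dm,
            (if h : ν < rowDeg F G i then
              x r ⟨i, ⟨ν, h⟩⟩ * matC F G ⟨i, ⟨ν, h⟩⟩ j else 0) :=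
          Finset.sum_subset (Finset.range_subset_range.mpr (hdm_le i)) (fun ν hν1 hν2 => by
            rw [Finset.mem_range] at hν1 hν2
            rw [dif_neg (by omega)])
        rw [e2]
        refine (Finset.sum_congr rfl fun ν hν => ?_).symm
        rw [Finset.mem_range] at hν
        by_cases hνlt : ν < rowDeg F G i
        · rw [dif_pos hνlt]
          have hSH := SH ν i hνlt (r - (ν+1))
          rw [show r - (ν+1) + ν + 1 = r from by omega] at hSH
          rw [show matC F G ⟨i, ⟨ν, hνlt⟩⟩ j = (G i j).coeff (ν+1) from rfl, hSH, mul_comm]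
        · rw [dif_neg hνlt]
          rw [Polynomial.coeff_eq_zero_of_natDegree_lt
            (lt_of_le_of_lt (natDegree_G_le G i j) (by omega)), zero_mul]
      · refine Finset.sum_congr rfl fun i _ => ?_
        rw [Nat.sub_zero, mul_comm]
        rfl
    have hWH : ∑ j, W j * H j l = 0 := by
      have hinner : ∀ s : ℕ,
          ∑ j, Polynomial.C ((x s ᵥ* matC F G + u s ᵥ* matE F G) j) * H j l = 0 := by
        intro s
        have hwj : ∀ j, (x s ᵥ* matC F G + u s ᵥ* matE F G) j
            = ∑ i, av s i * matE F G i j := by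
          intro j; rw [hav_eq s, vecMul_apply']
        have step1 : ∑ j, Polynomial.C ((x s ᵥ* matC F G + u s ᵥ* matE F G) j) * H j l
            = ∑ j, ∑ i, Polynomial.C (av s i) * (Polynomial.C (matE F G i j) * H j l) := by
          refine Finset.sum_congr rfl fun j _ => ?_
          rw [hwj j, map_sum, Finset.sum_mul]
          refine Finset.sum_congr rfl fun i _ => by rw [Polynomial.C_mul, mul_assoc]
        rw [step1, Finset.sum_comm]
        refine Finset.sum_eq_zero fun i _ => ?_
        rw [← Finset.mul_sum]
        by_cases hai : av s i = 0
        · rw [hai, map_zero, zero_mul]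
        · have hdi : rowDeg F G i = 0 := by
            by_contra hne; exact hai (hav_supp s i hne)
          have hGH : ∑ j, Polynomial.C (matE F G i j) * H j l = (G * H) i l := by
            rw [Matrix.mul_apply]
            refine Finset.sum_congr rfl fun j _ => ?_
            rw [show matE F G i j = (G i j).coeff 0 from rfl, ← row_const G hdi j]
          have hil : i ≠ l := fun hc => by rw [← hc, hdi] at hdl; omega
          rw [hGH, hH, Matrix.one_apply_ne hil, mul_zero]
      have expand : ∀ j, W j * H j l = ∑ s ∈ Finset.range N,
          (Polynomial.C ((x s ᵥ* matC F G + u s ᵥ* matE F G) j) * H j l)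
            * Polynomial.X ^ s := by
        intro j
        rw [hW]
        beta_reduce
        rw [Finset.sum_mul]
        refine Finset.sum_congr rfl fun s _ => by ring
      rw [Finset.sum_congr rfl fun j _ => expand j, Finset.sum_comm]
      refine Finset.sum_eq_zero fun s _ => ?_
      rw [← Finset.sum_mul, hinner s, zero_mul]
    have hEH : ∑ j, ((U ᵥ* G) j - W j) * H j l = ∑ j, (U ᵥ* G) j * H j l - ∑ j, W j * H j l := by
      rw [← Finset.sum_sub_distrib]
      exact Finset.sum_congr rfl fun j _ => by ring
    have hfull : U l = ∑ j, (U ᵥ* G) j * H j l := by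
      have h1 : (U ᵥ* G) ᵥ* H = U := by
        rw [Matrix.vecMul_vecMul, hH, Matrix.vecMul_one]
      have := congrFun h1 l
      rw [vecMul_apply'] at this
      exact this.symm
    have hcoef : (∑ j, ((U ᵥ* G) j - W j) * H j l).coeff t = 0 := by
      rw [Polynomial.finset_sum_coeff]
      refine Finset.sum_eq_zero fun j _ => ?_
      rw [Polynomial.coeff_mul]
      refine Finset.sum_eq_zero fun ab hab => ?_
      rw [Finset.HasAntidiagonal.mem_antidiagonal] at hab
      rcases Nat.lt_or_ge ab.1 dm with hlt | hge
      · have hDHlt : DH < ab.2 := by omega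
        rw [Polynomial.coeff_eq_zero_of_natDegree_lt
          (lt_of_le_of_lt (hDH_le j l) hDHlt), mul_zero]
      · have h1 : ab.1 < N := by omega
        rw [Polynomial.coeff_sub, MID ab.1 hge h1 j, hWco j ab.1, if_pos h1,
          sub_self, zero_mul]
    have : u t l = (∑ j, ((U ᵥ* G) j - W j) * H j l).coeff t := by
      rw [hEH, hWH, sub_zero, ← hfull, hUco l t, if_pos (by omega)]
    rw [this, hcoef]
  -- conclude
  funext s
  obtain ⟨l, ⟨ν, hν⟩⟩ := s
  set M := dm + DH + ν + 1 with hM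
  have hMp : M ≤ M * p := Nat.le_mul_of_pos_right M hppos
  have hdl : 0 < rowDeg F G l := by omega
  have h1 : x 0 = x (M * p) := perM M
  have h2 : x (M * p) ⟨l, ⟨ν, hν⟩⟩ = u (M * p - ν - 1) l := by
    have := SH ν l hν (M * p - ν - 1)
    rw [show M * p - ν - 1 + ν + 1 = M * p from by omega] at this
    exact this
  have h3 : u (M * p - ν - 1) l = 0 := core _ l (by omega) hdl
  rw [Pi.zero_apply, congrFun h1 _, h2, h3]

end Invariant

end CCAux

end ConvCode

/-- Corollary 4.6: the map `σ : K → F^δ`, `X ↦ Y` with `(X,Y) ∈ Ω`, is well defined,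
linear and injective, and `K` contains no nonzero `σ`-invariant subset. -/
theorem statement12 {F : Type} [Field F] [Fintype F]
    (k kb n : ℕ) (hkn : k + kb = n)
    (G : Matrix (Fin k) (Fin n) (Polynomial F)) (hG : ConvCode.IsMinimalEncoder F G)
    (Gh : Matrix (Fin kb) (Fin n) (Polynomial F)) (hGh : ConvCode.IsMinimalEncoder F Gh)
    (hdual : ConvCode.code F Gh = ConvCode.dualCode F (ConvCode.code F G)) :
    (∀ X : ConvCode.States F G → F,
        X ᵥ* (ConvCode.matC F G * (ConvCode.matE F Gh)ᵀ * ConvCode.matB F Gh) = 0 →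
        ∃! Y : ConvCode.States F G → F, (X, Y) ∈ ConvCode.Omega F G) ∧
    (∀ p q, p ∈ ConvCode.Omega F G → q ∈ ConvCode.Omega F G →
        p + q ∈ ConvCode.Omega F G) ∧
    (∀ (c : F) p, p ∈ ConvCode.Omega F G → c • p ∈ ConvCode.Omega F G) ∧
    (∀ X X' Y : ConvCode.States F G → F,
        (X, Y) ∈ ConvCode.Omega F G → (X', Y) ∈ ConvCode.Omega F G → X = X') ∧
    (∀ x : ℕ → (ConvCode.States F G → F),
        (∀ i, x i ᵥ* (ConvCode.matC F G * (ConvCode.matE F Gh)ᵀ * ConvCode.matB F Gh) = 0 ∧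
          (x i, x (i + 1)) ∈ ConvCode.Omega F G) →
        x 0 = 0) := by
  have hkn' : k ≤ n := by omega
  refine ⟨?_, ?_, ?_, ?_, ?_⟩
  · intro X hX
    obtain ⟨Y, hY⟩ := ConvCode.CCAux.omega_exists G Gh hkn hG hGh hdual X hX
    exact ⟨Y, hY, fun Y' hY' => ConvCode.CCAux.omega_inj_right G hkn' hG hY' hY⟩
  · exact fun p q hp hq => ConvCode.CCAux.omega_add G hp hq
  · exact fun c p hp => ConvCode.CCAux.omega_smul G c hp
  · exact fun X X' Y h1 h2 => ConvCode.CCAux.omega_inj_left G hkn' hG h1 h2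
  · intro x hx
    exact ConvCode.CCAux.invariant_zero G hkn' hG x (fun t => (hx t).2)
end
end

section
/- Let (A,B,C,E) be the CCF of a minimal encoder G of an (n,k,δ) convolutional code C and (Â,B̂,Ĉ,Ê) the CCF of a minimal encoder Ĝ of the dual code Ĉ. Then N + N̂^T = −Ĉ C^T. -/
open Polynomial Matrix
open scoped Classical

noncomputable section

namespace ConvCode

variable (F : Type) [Field F] [Fintype F]

section Lemmas
variable {F}

lemma stateIdx_ext {k : ℕ} {d : Fin k → ℕ} {s t : StateIdx k d}
    (h1 : s.1 = t.1) (h2 : (s.2 : ℕ) = (t.2 : ℕ)) : s = t := by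
  obtain ⟨i, ν⟩ := s; obtain ⟨i', ν'⟩ := t
  dsimp at h1 h2
  subst h1
  exact congrArg (Sigma.mk i) (Fin.ext h2)

lemma ccfA_pow {k : ℕ} (d : Fin k → ℕ) (p : ℕ) (s t : StateIdx k d) :
    (ccfA F d ^ p) s t = if s.1 = t.1 ∧ (s.2 : ℕ) + p = (t.2 : ℕ) then 1 else 0 := by
  induction p generalizing t with
  | zero =>
    rw [pow_zero, Matrix.one_apply]
    congr 1
    apply propext
    constructor
    · rintro rfl; exact ⟨rfl, by omega⟩
    · rintro ⟨h1, h2⟩; exact stateIdx_ext h1 (by omega)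
  | succ p ih =>
    rw [pow_succ, Matrix.mul_apply]
    simp only [ih]
    simp only [ccfA, Matrix.of_apply]
    by_cases h : s.1 = t.1 ∧ (s.2 : ℕ) + (p + 1) = (t.2 : ℕ)
    · rw [if_pos h]
      obtain ⟨h1, h2⟩ := h
      have hlt : (s.2 : ℕ) + p < d t.1 := by have := t.2.isLt; omega
      rw [Fintype.sum_eq_single (⟨t.1, ⟨(s.2 : ℕ) + p, hlt⟩⟩ : StateIdx k d)]
      · rw [if_pos ⟨h1, rfl⟩, if_pos ⟨rfl, show (s.2 : ℕ) + p + 1 = (t.2 : ℕ) by omega⟩,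
          one_mul]
      · intro x hxne
        by_cases c1 : s.1 = x.1 ∧ (s.2 : ℕ) + p = (x.2 : ℕ)
        · rw [if_pos c1]
          by_cases c2 : x.1 = t.1 ∧ (x.2 : ℕ) + 1 = (t.2 : ℕ)
          · exact absurd (show x = (⟨t.1, ⟨(s.2 : ℕ) + p, hlt⟩⟩ : StateIdx k d) from
              stateIdx_ext c2.1 c1.2.symm) hxne
          · rw [if_neg c2, mul_zero]
        · rw [if_neg c1, zero_mul]
    · rw [if_neg h]
      apply Finset.sum_eq_zero
      intro x _
      by_cases c1 : s.1 = x.1 ∧ (s.2 : ℕ) + p = (x.2 : ℕ)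
      · rw [if_pos c1, one_mul, if_neg]
        rintro ⟨hx1, hx2⟩
        exact h ⟨c1.1.trans hx1, by omega⟩
      · rw [if_neg c1, zero_mul]
set_option linter.unusedSectionVars false

lemma Smat_apply {k n : ℕ} (d : Fin k → ℕ) (G : Matrix (Fin k) (Fin n) (Polynomial F))
    (hd : ∀ i j, (G i j).natDegree ≤ d i) (r : ℕ) (s : StateIdx k d) (j : Fin n) :
    Smat F d G r s j = if (s.2 : ℕ) = 0 then (G s.1 j).coeff r else 0 := by
  match r with
  | 0 =>
    rw [Smat, Matrix.mul_apply]
    simp only [Matrix.transpose_apply, ccfB, ccfE, Matrix.of_apply]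
    rw [Fintype.sum_eq_single s.1]
    · by_cases h : (s.2 : ℕ) = 0
      · rw [if_pos ⟨rfl, h⟩, if_pos h, one_mul]
      · rw [if_neg (fun hc => h hc.2), if_neg h, zero_mul]
    · intro i hi
      rw [if_neg (fun hc => hi hc.1.symm), zero_mul]
  | (t + 1) =>
    rw [Smat, Matrix.mul_apply]
    have hBtBA : ∀ u : StateIdx k d, ((ccfB F d)ᵀ * ccfB F d * ccfA F d ^ t) s u =
        if s.1 = u.1 ∧ (s.2 : ℕ) = 0 ∧ (u.2 : ℕ) = t then 1 else 0 := by
      intro u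
      rw [Matrix.mul_apply]
      have hBtB : ∀ w : StateIdx k d, ((ccfB F d)ᵀ * ccfB F d) s w =
          if s.1 = w.1 ∧ (s.2 : ℕ) = 0 ∧ (w.2 : ℕ) = 0 then 1 else 0 := by
        intro w
        rw [Matrix.mul_apply]
        simp only [Matrix.transpose_apply, ccfB, Matrix.of_apply]
        rw [Fintype.sum_eq_single s.1]
        · by_cases h1 : (s.2 : ℕ) = 0
          · rw [if_pos ⟨rfl, h1⟩, one_mul]
            by_cases h2 : s.1 = w.1 ∧ (w.2 : ℕ) = 0
            · rw [if_pos ⟨h2.1.symm, h2.2⟩, if_pos ⟨h2.1, h1, h2.2⟩]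
            · rw [if_neg, if_neg]
              · rintro ⟨a, -, b⟩; exact h2 ⟨a, b⟩
              · rintro ⟨a, b⟩; exact h2 ⟨a.symm, b⟩
          · rw [if_neg (fun hc => h1 hc.2), zero_mul,
              if_neg (fun hc => h1 hc.2.1)]
        · intro i hi
          rw [if_neg (fun hc => hi hc.1.symm), zero_mul]
      simp only [hBtB, ccfA_pow]
      by_cases h : s.1 = u.1 ∧ (s.2 : ℕ) = 0 ∧ (u.2 : ℕ) = t
      · rw [if_pos h]
        obtain ⟨h1, h2, h3⟩ := h
        have hpos : 0 < d s.1 := s.2.pos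
        rw [Fintype.sum_eq_single (⟨s.1, ⟨0, hpos⟩⟩ : StateIdx k d)]
        · rw [if_pos ⟨rfl, h2, rfl⟩, if_pos ⟨h1, show (0 : ℕ) + t = (u.2 : ℕ) by omega⟩, one_mul]
        · intro x hxne
          by_cases c1 : s.1 = x.1 ∧ (s.2 : ℕ) = 0 ∧ (x.2 : ℕ) = 0
          · exact absurd (show x = (⟨s.1, ⟨0, hpos⟩⟩ : StateIdx k d) from
              stateIdx_ext c1.1.symm c1.2.2) hxne
          · rw [if_neg c1, zero_mul]
      · rw [if_neg h]
        apply Finset.sum_eq_zero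
        intro x _
        by_cases c1 : s.1 = x.1 ∧ (s.2 : ℕ) = 0 ∧ (x.2 : ℕ) = 0
        · rw [if_pos c1, one_mul, if_neg]
          rintro ⟨a, b⟩
          exact h ⟨c1.1.trans a, c1.2.1, by omega⟩
        · rw [if_neg c1, zero_mul]
    simp only [hBtBA, ccfC, Matrix.of_apply]
    by_cases h1 : (s.2 : ℕ) = 0
    · rw [if_pos h1]
      by_cases h2 : t < d s.1
      · rw [Fintype.sum_eq_single (⟨s.1, ⟨t, h2⟩⟩ : StateIdx k d)]
        · rw [if_pos ⟨rfl, h1, rfl⟩, one_mul]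
        · intro x hxne
          by_cases c1 : s.1 = x.1 ∧ (s.2 : ℕ) = 0 ∧ (x.2 : ℕ) = t
          · exact absurd (show x = (⟨s.1, ⟨t, h2⟩⟩ : StateIdx k d) from
              stateIdx_ext c1.1.symm c1.2.2) hxne
          · rw [if_neg c1, zero_mul]
      · have hz : (G s.1 j).coeff (t + 1) = 0 := by
          apply Polynomial.coeff_eq_zero_of_natDegree_lt
          have := hd s.1 j; omega
        rw [hz]
        apply Finset.sum_eq_zero
        intro x _
        rw [if_neg, zero_mul]
        rintro ⟨a, -, b⟩
        have hlt : (x.2 : ℕ) < d s.1 := by rw [a]; exact x.2.isLt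
        omega
    · rw [if_neg h1]
      apply Finset.sum_eq_zero
      intro x _
      rw [if_neg (fun hc => h1 hc.2.1), zero_mul]
lemma AtS_apply {k n : ℕ} (d : Fin k → ℕ) (G : Matrix (Fin k) (Fin n) (Polynomial F))
    (hd : ∀ i j, (G i j).natDegree ≤ d i) (p r : ℕ) (s : StateIdx k d) (j : Fin n) :
    ((ccfA F d)ᵀ ^ p * Smat F d G r) s j =
      if (s.2 : ℕ) = p then (G s.1 j).coeff r else 0 := by
  rw [Matrix.mul_apply]
  simp only [← Matrix.transpose_pow, Matrix.transpose_apply, ccfA_pow, Smat_apply d G hd]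
  by_cases h : (s.2 : ℕ) = p
  · rw [if_pos h]
    have hpos : 0 < d s.1 := s.2.pos
    rw [Fintype.sum_eq_single (⟨s.1, ⟨0, hpos⟩⟩ : StateIdx k d)]
    · rw [if_pos ⟨rfl, show (0 : ℕ) + p = (s.2 : ℕ) by omega⟩,
        if_pos (show ((⟨0, hpos⟩ : Fin (d s.1)) : ℕ) = 0 from rfl), one_mul]
    · intro x hxne
      by_cases c1 : x.1 = s.1 ∧ (x.2 : ℕ) + p = (s.2 : ℕ)
      · by_cases c2 : (x.2 : ℕ) = 0
        · exact absurd (show x = (⟨s.1, ⟨0, hpos⟩⟩ : StateIdx k d) from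
            stateIdx_ext c1.1 c2) hxne
        · rw [if_neg c2, mul_zero]
      · rw [if_neg c1, zero_mul]
  · rw [if_neg h]
    apply Finset.sum_eq_zero
    intro x _
    by_cases c1 : x.1 = s.1 ∧ (x.2 : ℕ) + p = (s.2 : ℕ)
    · rw [if_pos c1, one_mul, if_neg]
      intro c2
      exact h (by omega)
    · rw [if_neg c1, zero_mul]

lemma StA_apply {k n : ℕ} (d : Fin k → ℕ) (G : Matrix (Fin k) (Fin n) (Polynomial F))
    (hd : ∀ i j, (G i j).natDegree ≤ d i) (q r : ℕ) (s : StateIdx k d) (j : Fin n) :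
    ((Smat F d G r)ᵀ * ccfA F d ^ q) j s =
      if (s.2 : ℕ) = q then (G s.1 j).coeff r else 0 := by
  rw [Matrix.mul_apply]
  simp only [Matrix.transpose_apply, ccfA_pow, Smat_apply d G hd]
  by_cases h : (s.2 : ℕ) = q
  · rw [if_pos h]
    have hpos : 0 < d s.1 := s.2.pos
    rw [Fintype.sum_eq_single (⟨s.1, ⟨0, hpos⟩⟩ : StateIdx k d)]
    · rw [if_pos (show ((⟨0, hpos⟩ : Fin (d s.1)) : ℕ) = 0 from rfl),
        if_pos ⟨rfl, show (0 : ℕ) + q = (s.2 : ℕ) by omega⟩, mul_one]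
    · intro x hxne
      by_cases c2 : (x.2 : ℕ) = 0
      · by_cases c1 : x.1 = s.1 ∧ (x.2 : ℕ) + q = (s.2 : ℕ)
        · exact absurd (show x = (⟨s.1, ⟨0, hpos⟩⟩ : StateIdx k d) from
            stateIdx_ext c1.1 c2) hxne
        · rw [if_neg c1, mul_zero]
      · rw [if_neg c2, zero_mul]
  · rw [if_neg h]
    apply Finset.sum_eq_zero
    intro x _
    by_cases c2 : (x.2 : ℕ) = 0
    · rw [if_pos c2, if_neg, mul_zero]
      rintro ⟨-, c12⟩
      exact h (by omega)
    · rw [if_neg c2, zero_mul]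

lemma card_states_ge {k n : ℕ} (G : Matrix (Fin k) (Fin n) (Polynomial F))
    (s : States F G) : (s.2 : ℕ) + 1 ≤ Fintype.card (States F G) := by
  have h1 : (s.2 : ℕ) + 1 ≤ rowDeg F G s.1 := s.2.isLt
  have h2 : rowDeg F G s.1 ≤ ∑ i, rowDeg F G i :=
    Finset.single_le_sum (fun i _ => Nat.zero_le _) (Finset.mem_univ s.1)
  have h3 : Fintype.card (States F G) = ∑ i, rowDeg F G i := by
    simp [StateIdx, Fintype.card_sigma]
  omega

lemma Nm_apply {k kb n : ℕ} (G : Matrix (Fin k) (Fin n) (Polynomial F))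
    (Gh : Matrix (Fin kb) (Fin n) (Polynomial F)) (sh : States F Gh) (s : States F G) :
    Nm F G Gh sh s = ∑ j ∈ Finset.range ((sh.2 : ℕ) + 1), ∑ j' : Fin n,
      (Gh sh.1 j').coeff j * (G s.1 j').coeff ((s.2 : ℕ) + (sh.2 : ℕ) + 2 - j) := by
  have hdG : ∀ i j, (G i j).natDegree ≤ rowDeg F G i :=
    fun i j => Finset.le_sup (f := fun j => (G i j).natDegree) (Finset.mem_univ j)
  have hdGh : ∀ i j, (Gh i j).natDegree ≤ rowDeg F Gh i :=
    fun i j => Finset.le_sup (f := fun j => (Gh i j).natDegree) (Finset.mem_univ j)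
  have hterm : ∀ m i j : ℕ,
      ((matA F Gh)ᵀ ^ (i - 1) * Sm F Gh j * (Sm F G (m - j))ᵀ * matA F G ^ (m - (i + 1))) sh s
      = if (sh.2 : ℕ) = i - 1 ∧ (s.2 : ℕ) = m - (i + 1) then
          ∑ j' : Fin n, (Gh sh.1 j').coeff j * (G s.1 j').coeff (m - j) else 0 := by
    intro m i j
    rw [Matrix.mul_assoc ((matA F Gh)ᵀ ^ (i - 1) * Sm F Gh j), Matrix.mul_apply]
    simp only [matA, Sm, AtS_apply (rowDeg F Gh) Gh hdGh, StA_apply (rowDeg F G) G hdG]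
    by_cases hc : (sh.2 : ℕ) = i - 1 ∧ (s.2 : ℕ) = m - (i + 1)
    · rw [if_pos hc]
      exact Finset.sum_congr rfl fun j' _ => by rw [if_pos hc.1, if_pos hc.2]
    · rw [if_neg hc]
      apply Finset.sum_eq_zero
      intro j' _
      by_cases h1 : (sh.2 : ℕ) = i - 1
      · rw [if_pos h1, if_neg fun h2 => hc ⟨h1, h2⟩, mul_zero]
      · rw [if_neg h1, zero_mul]
  have hcard : (s.2 : ℕ) + (sh.2 : ℕ) + 2 ≤
      Fintype.card (States F G) + Fintype.card (States F Gh) := by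
    have := card_states_ge G s
    have := card_states_ge Gh sh
    omega
  rw [Nm]
  simp only [Matrix.sum_apply, hterm]
  rw [Finset.sum_eq_single_of_mem ((s.2 : ℕ) + (sh.2 : ℕ) + 2)
    (Finset.mem_Icc.mpr ⟨by omega, hcard⟩)]
  · rw [Finset.sum_eq_single_of_mem ((sh.2 : ℕ) + 1)
      (Finset.mem_Icc.mpr ⟨by omega, by omega⟩)]
    · apply Finset.sum_congr rfl
      intro j hj
      rw [if_pos ⟨by omega, by omega⟩]
    · intro i hi hine
      apply Finset.sum_eq_zero
      intro j _
      rw [if_neg]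
      rw [Finset.mem_Icc] at hi
      rintro ⟨h1, h2⟩
      omega
  · intro m hm hmne
    apply Finset.sum_eq_zero
    intro i hi
    apply Finset.sum_eq_zero
    intro j _
    rw [if_neg]
    rw [Finset.mem_Icc] at hi hm
    rintro ⟨h1, h2⟩
    omega
lemma row_dot {k kb n : ℕ} (G : Matrix (Fin k) (Fin n) (Polynomial F))
    (Gh : Matrix (Fin kb) (Fin n) (Polynomial F))
    (hdual : code F Gh = dualCode F (code F G)) (a : Fin kb) (b : Fin k) :
    ∑ j' : Fin n, Gh a j' * G b j' = 0 := by
  have hrowGh : (fun j => Gh a j) ∈ code F Gh := by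
    refine ⟨Pi.single a 1, ?_⟩
    funext j
    simp [Matrix.vecMul, dotProduct, Pi.single_apply]
  have hrowG : (fun j => G b j) ∈ code F G := by
    refine ⟨Pi.single b 1, ?_⟩
    funext j
    simp [Matrix.vecMul, dotProduct, Pi.single_apply]
  rw [hdual] at hrowGh
  exact hrowGh _ hrowG
end Lemmas
end ConvCode
/-- Proposition 4.7(a): `N + N̂ᵀ = −Ĉ Cᵀ`. -/
theorem statement13 {F : Type} [Field F] [Fintype F]
    (k kb n : ℕ) (hkn : k + kb = n)
    (G : Matrix (Fin k) (Fin n) (Polynomial F)) (hG : ConvCode.IsMinimalEncoder F G)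
    (Gh : Matrix (Fin kb) (Fin n) (Polynomial F)) (hGh : ConvCode.IsMinimalEncoder F Gh)
    (hdual : ConvCode.code F Gh = ConvCode.dualCode F (ConvCode.code F G)) :
    ConvCode.Nm F G Gh + (ConvCode.Nm F Gh G)ᵀ =
      -(ConvCode.matC F Gh * (ConvCode.matC F G)ᵀ) := by
  ext sh s
  set ν : ℕ := (s.2 : ℕ) with hν
  set νh : ℕ := (sh.2 : ℕ) with hνh
  -- the convolution expression
  set T : ℕ → F := fun j => ∑ j' : Fin n,
    (Gh sh.1 j').coeff j * (G s.1 j').coeff (ν + νh + 2 - j) with hT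
  have hconv : ∑ jx ∈ Finset.range (ν + νh + 2 + 1), T jx = 0 := by
    have h0 : (0 : Polynomial F) = ∑ j' : Fin n, Gh sh.1 j' * G s.1 j' :=
      (ConvCode.row_dot G Gh hdual sh.1 s.1).symm
    have := congrArg (fun p => Polynomial.coeff p (ν + νh + 2)) h0
    simp only [Polynomial.coeff_zero, Polynomial.finset_sum_coeff, Polynomial.coeff_mul,
      Finset.Nat.sum_antidiagonal_eq_sum_range_succ_mk] at this
    simp only [hT]
    rw [Finset.sum_comm]
    exact this.symm
  -- split the convolution sum
  have hsplit : ∑ jx ∈ Finset.range (ν + νh + 2 + 1), T jx =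
      (∑ jx ∈ Finset.range (νh + 1), T jx) + T (νh + 1) +
        ∑ t ∈ Finset.range (ν + 1), T (νh + 2 + t) := by
    have e1 : ∑ jx ∈ Finset.range (νh + 2), T jx =
        ∑ jx ∈ Finset.range (νh + 1), T jx + T (νh + 1) := Finset.sum_range_succ T (νh + 1)
    have e2 : (∑ jx ∈ Finset.range (νh + 2), T jx) +
        ∑ jx ∈ Finset.Ico (νh + 2) (ν + νh + 2 + 1), T jx =
        ∑ jx ∈ Finset.range (ν + νh + 2 + 1), T jx :=
      Finset.sum_range_add_sum_Ico T (by omega)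
    have e3 : ∑ jx ∈ Finset.Ico (νh + 2) (ν + νh + 2 + 1), T jx =
        ∑ t ∈ Finset.range (ν + 1), T (νh + 2 + t) := by
      rw [Finset.sum_Ico_eq_sum_range, show ν + νh + 2 + 1 - (νh + 2) = ν + 1 by omega]
    rw [← e2, e1, e3]
  -- entries of the three matrices
  rw [Matrix.add_apply, Matrix.transpose_apply, ConvCode.Nm_apply, ConvCode.Nm_apply,
    Matrix.neg_apply, Matrix.mul_apply]
  have hC : ∑ j' : Fin n, ConvCode.matC F Gh sh j' * (ConvCode.matC F G)ᵀ j' s =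
      T (νh + 1) := by
    rw [hT]
    apply Finset.sum_congr rfl
    intro j' _
    simp only [Matrix.transpose_apply, ConvCode.matC, ConvCode.ccfC, Matrix.of_apply]
    congr 2
    omega
  rw [hC]
  have hB : ∑ j ∈ Finset.range ((s.2 : ℕ) + 1), ∑ j' : Fin n,
      (G s.1 j').coeff j * (Gh sh.1 j').coeff ((sh.2 : ℕ) + (s.2 : ℕ) + 2 - j) =
      ∑ t ∈ Finset.range (ν + 1), T (νh + 2 + t) := by
    rw [← Finset.sum_range_reflect (fun j => ∑ j' : Fin n,
      (G s.1 j').coeff j * (Gh sh.1 j').coeff ((sh.2 : ℕ) + (s.2 : ℕ) + 2 - j)) (ν + 1)]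
    apply Finset.sum_congr rfl
    intro t ht
    rw [Finset.mem_range] at ht
    rw [hT]
    apply Finset.sum_congr rfl
    intro j' _
    rw [show ν + 1 - 1 - t = ν - t by omega, mul_comm]
    congr 2
    · omega
    · omega
  rw [hB]
  have hA : ∑ j ∈ Finset.range ((sh.2 : ℕ) + 1), ∑ j' : Fin n,
      (Gh sh.1 j').coeff j * (G s.1 j').coeff ((s.2 : ℕ) + (sh.2 : ℕ) + 2 - j) =
      ∑ jx ∈ Finset.range (νh + 1), T jx := rfl
  rw [hA]
  rw [hsplit] at hconv
  linear_combination hconv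
end
end

section
/- Let (A,B,C,E) be the CCF of a minimal encoder G of an (n,k,δ) convolutional code C and (Â,B̂,Ĉ,Ê) the CCF of a minimal encoder Ĝ of the dual code Ĉ. Then Ĉ S_0^T + Ŝ_0 C^T = N A + Â^T N̂^T. -/
open Polynomial Matrix
open scoped Classical

noncomputable section

section Aux14
namespace ConvCode
variable {F : Type} [Field F] [Fintype F]

private lemma aux_sum_state {k : ℕ} {M : Type} [AddCommMonoid M] (d : Fin k → ℕ) (i₀ : Fin k)
    (c : ℕ) (f : StateIdx k d → M) :
    (∑ t : StateIdx k d, if t.1 = i₀ ∧ (t.2 : ℕ) = c then f t else 0) =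
      if h : c < d i₀ then f ⟨i₀, ⟨c, h⟩⟩ else 0 := by
  by_cases h : c < d i₀
  · rw [dif_pos h, Finset.sum_eq_single (⟨i₀, ⟨c, h⟩⟩ : StateIdx k d)]
    · rw [if_pos ⟨rfl, rfl⟩]
    · rintro ⟨i, ν⟩ _ hne
      rw [if_neg]
      rintro ⟨h1, h2⟩
      dsimp only at h1 h2
      apply hne
      subst h1
      obtain rfl : ν = ⟨c, h⟩ := Fin.ext h2
      rfl
    · intro h'; exact absurd (Finset.mem_univ _) h'
  · rw [dif_neg h]
    apply Finset.sum_eq_zero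
    rintro ⟨i, ν⟩ _
    rw [if_neg]
    rintro ⟨h1, h2⟩
    dsimp only at h1 h2
    subst h1
    exact h (h2 ▸ ν.isLt)

private lemma aux_ccfA_pow {k : ℕ} (d : Fin k → ℕ) (m : ℕ) (s t : StateIdx k d) :
    (ccfA F d ^ m) s t = if s.1 = t.1 ∧ (s.2 : ℕ) + m = (t.2 : ℕ) then 1 else 0 := by
  induction m generalizing t with
  | zero =>
    rw [pow_zero]
    by_cases h : s = t
    · subst h
      rw [Matrix.one_apply_eq, if_pos ⟨rfl, rfl⟩]
    · rw [Matrix.one_apply_ne h, if_neg]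
      rintro ⟨h1, h2⟩
      apply h
      obtain ⟨i, ν⟩ := s; obtain ⟨i', ν'⟩ := t
      dsimp at h1 h2
      subst h1
      obtain rfl : ν = ν' := Fin.ext (by omega)
      rfl
  | succ m ih =>
    rw [pow_succ, Matrix.mul_apply]
    have key : ∀ u : StateIdx k d, (ccfA F d ^ m) s u * ccfA F d u t =
        if u.1 = s.1 ∧ (u.2 : ℕ) = (s.2 : ℕ) + m then ccfA F d u t else 0 := by
      intro u
      rw [ih]
      by_cases h : s.1 = u.1 ∧ (s.2 : ℕ) + m = (u.2 : ℕ)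
      · rw [if_pos h, if_pos ⟨h.1.symm, h.2.symm⟩, one_mul]
      · rw [if_neg h, if_neg (fun hc => h ⟨hc.1.symm, hc.2.symm⟩), zero_mul]
    simp only [key]
    rw [aux_sum_state]
    by_cases h : (s.2 : ℕ) + m < d s.1
    · rw [dif_pos h]
      show (if s.1 = t.1 ∧ ((s.2 : ℕ) + m) + 1 = (t.2 : ℕ) then (1 : F) else 0) = _
      exact if_congr (by constructor <;> (rintro ⟨a, b⟩; exact ⟨a, by omega⟩)) rfl rfl
    · rw [dif_neg h, if_neg]
      rintro ⟨h1, h2⟩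
      have ht := t.2.isLt
      have hd : d s.1 = d t.1 := by rw [h1]
      omega

private lemma aux_coeff_rowDeg {k n : ℕ} (G : Matrix (Fin k) (Fin n) (Polynomial F)) (i : Fin k)
    (j : Fin n) {m : ℕ} (hm : rowDeg F G i < m) : (G i j).coeff m = 0 := by
  apply Polynomial.coeff_eq_zero_of_natDegree_lt
  exact lt_of_le_of_lt (Finset.le_sup (f := fun j => (G i j).natDegree) (Finset.mem_univ j)) hm

private lemma aux_ApowC {k n : ℕ} (G : Matrix (Fin k) (Fin n) (Polynomial F)) (m : ℕ)
    (s : States F G) (j : Fin n) :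
    (ccfA F (rowDeg F G) ^ m * ccfC F (rowDeg F G) G) s j =
      (G s.1 j).coeff ((s.2 : ℕ) + m + 1) := by
  rw [Matrix.mul_apply]
  have key : ∀ t : States F G, (ccfA F (rowDeg F G) ^ m) s t * ccfC F (rowDeg F G) G t j =
      if t.1 = s.1 ∧ (t.2 : ℕ) = (s.2 : ℕ) + m then ccfC F (rowDeg F G) G t j else 0 := by
    intro t
    rw [aux_ccfA_pow]
    by_cases h : s.1 = t.1 ∧ (s.2 : ℕ) + m = (t.2 : ℕ)
    · rw [if_pos h, if_pos ⟨h.1.symm, h.2.symm⟩, one_mul]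
    · rw [if_neg h, if_neg (fun hc => h ⟨hc.1.symm, hc.2.symm⟩), zero_mul]
  simp only [key]
  rw [aux_sum_state]
  by_cases h : (s.2 : ℕ) + m < rowDeg F G s.1
  · rw [dif_pos h]
    rfl
  · rw [dif_neg h,
      aux_coeff_rowDeg G s.1 j (show rowDeg F G s.1 < (s.2 : ℕ) + m + 1 by omega)]

private lemma aux_BtB {k : ℕ} (d : Fin k → ℕ) (s t : StateIdx k d) :
    ((ccfB F d)ᵀ * ccfB F d) s t =
      if t.1 = s.1 ∧ (s.2 : ℕ) = 0 ∧ (t.2 : ℕ) = 0 then 1 else 0 := by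
  rw [Matrix.mul_apply]
  simp only [ccfB, Matrix.transpose_apply, Matrix.of_apply]
  rw [Finset.sum_eq_single s.1 (fun l _ hl => by rw [if_neg (fun hc => hl hc.1.symm), zero_mul])
    (fun h => absurd (Finset.mem_univ _) h)]
  by_cases h1 : (s.2 : ℕ) = 0
  · rw [if_pos ⟨rfl, h1⟩, one_mul]
    by_cases h2 : t.1 = s.1 ∧ (t.2 : ℕ) = 0
    · rw [if_pos h2, if_pos ⟨h2.1, h1, h2.2⟩]
    · rw [if_neg h2, if_neg (fun hc => h2 ⟨hc.1, hc.2.2⟩)]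
  · rw [if_neg (fun hc => h1 hc.2), zero_mul, if_neg (fun hc => h1 hc.2.1)]

private lemma aux_Sm_apply {k n : ℕ} (G : Matrix (Fin k) (Fin n) (Polynomial F)) (m : ℕ)
    (s : States F G) (j : Fin n) :
    Sm F G m s j = if (s.2 : ℕ) = 0 then (G s.1 j).coeff m else 0 := by
  cases m with
  | zero =>
    show ((ccfB F (rowDeg F G))ᵀ * ccfE F G) s j = _
    rw [Matrix.mul_apply]
    simp only [ccfB, ccfE, Matrix.transpose_apply, Matrix.of_apply]
    rw [Finset.sum_eq_single s.1 (fun l _ hl => by rw [if_neg (fun hc => hl hc.1.symm), zero_mul])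
      (fun h => absurd (Finset.mem_univ _) h)]
    by_cases h : (s.2 : ℕ) = 0
    · rw [if_pos ⟨rfl, h⟩, one_mul, if_pos h]
    · rw [if_neg (fun hc => h hc.2), zero_mul, if_neg h]
  | succ m =>
    show ((ccfB F (rowDeg F G))ᵀ * ccfB F (rowDeg F G) * ccfA F (rowDeg F G) ^ m *
        ccfC F (rowDeg F G) G) s j = _
    rw [Matrix.mul_assoc ((ccfB F (rowDeg F G))ᵀ * ccfB F (rowDeg F G)), Matrix.mul_apply]
    have key : ∀ t : States F G, ((ccfB F (rowDeg F G))ᵀ * ccfB F (rowDeg F G)) s t *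
        (ccfA F (rowDeg F G) ^ m * ccfC F (rowDeg F G) G) t j =
        if t.1 = s.1 ∧ (t.2 : ℕ) = 0 then
          (if (s.2 : ℕ) = 0 then (ccfA F (rowDeg F G) ^ m * ccfC F (rowDeg F G) G) t j else 0)
        else 0 := by
      intro t
      rw [aux_BtB]
      by_cases h : t.1 = s.1 ∧ (s.2 : ℕ) = 0 ∧ (t.2 : ℕ) = 0
      · rw [if_pos h, one_mul, if_pos ⟨h.1, h.2.2⟩, if_pos h.2.1]
      · rw [if_neg h, zero_mul]
        by_cases h2 : t.1 = s.1 ∧ (t.2 : ℕ) = 0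
        · rw [if_pos h2, if_neg (fun hs => h ⟨h2.1, hs, h2.2⟩)]
        · rw [if_neg h2]
    simp only [key]
    rw [aux_sum_state, dif_pos s.2.pos]
    by_cases hs : (s.2 : ℕ) = 0
    · rw [if_pos hs, if_pos hs, aux_ApowC]
      norm_num
    · rw [if_neg hs, if_neg hs]

private lemma aux_mul_Apow {k : ℕ} (d : Fin k → ℕ) {ρ : Type} [Fintype ρ]
    (X : Matrix ρ (StateIdx k d) F) (q : ℕ) (r : ρ) (t : StateIdx k d) :
    (X * ccfA F d ^ q) r t =
      if h : q ≤ (t.2 : ℕ) then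
        X r ⟨t.1, ⟨(t.2 : ℕ) - q, Nat.lt_of_le_of_lt (Nat.sub_le _ _) t.2.isLt⟩⟩ else 0 := by
  rw [Matrix.mul_apply]
  by_cases h : q ≤ (t.2 : ℕ)
  · rw [dif_pos h]
    have key : ∀ u : StateIdx k d, X r u * (ccfA F d ^ q) u t =
        if u.1 = t.1 ∧ (u.2 : ℕ) = (t.2 : ℕ) - q then X r u else 0 := by
      intro u
      rw [aux_ccfA_pow]
      by_cases hu : u.1 = t.1 ∧ (u.2 : ℕ) + q = (t.2 : ℕ)
      · rw [if_pos hu, mul_one, if_pos ⟨hu.1, by omega⟩]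
      · rw [if_neg hu, mul_zero, if_neg (by rintro ⟨a, b⟩; exact hu ⟨a, by omega⟩)]
    simp only [key]
    rw [aux_sum_state, dif_pos (Nat.lt_of_le_of_lt (Nat.sub_le _ _) t.2.isLt)]
  · rw [dif_neg h]
    apply Finset.sum_eq_zero
    intro u _
    rw [aux_ccfA_pow, if_neg (by rintro ⟨a, b⟩; exact h (by omega)), mul_zero]

private lemma aux_Atpow_mul {k : ℕ} (d : Fin k → ℕ) {ρ : Type} [Fintype ρ]
    (X : Matrix (StateIdx k d) ρ F) (p : ℕ) (s : StateIdx k d) (r : ρ) :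
    ((ccfA F d)ᵀ ^ p * X) s r =
      if h : p ≤ (s.2 : ℕ) then
        X ⟨s.1, ⟨(s.2 : ℕ) - p, Nat.lt_of_le_of_lt (Nat.sub_le _ _) s.2.isLt⟩⟩ r else 0 := by
  rw [← Matrix.transpose_pow, Matrix.mul_apply]
  by_cases h : p ≤ (s.2 : ℕ)
  · rw [dif_pos h]
    have key : ∀ u : StateIdx k d, ((ccfA F d ^ p)ᵀ) s u * X u r =
        if u.1 = s.1 ∧ (u.2 : ℕ) = (s.2 : ℕ) - p then X u r else 0 := by
      intro u
      rw [Matrix.transpose_apply, aux_ccfA_pow]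
      by_cases hu : u.1 = s.1 ∧ (u.2 : ℕ) + p = (s.2 : ℕ)
      · rw [if_pos hu, one_mul, if_pos ⟨hu.1, by omega⟩]
      · rw [if_neg hu, zero_mul, if_neg (by rintro ⟨a, b⟩; exact hu ⟨a, by omega⟩)]
    simp only [key]
    rw [aux_sum_state, dif_pos (Nat.lt_of_le_of_lt (Nat.sub_le _ _) s.2.isLt)]
  · rw [dif_neg h]
    apply Finset.sum_eq_zero
    intro u _
    rw [Matrix.transpose_apply, aux_ccfA_pow, if_neg (by rintro ⟨a, b⟩; exact h (by omega)),
      zero_mul]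

private lemma aux_SSt {k kb n : ℕ} (G : Matrix (Fin k) (Fin n) (Polynomial F))
    (Gh : Matrix (Fin kb) (Fin n) (Polynomial F)) (a b : ℕ) (s : States F Gh) (t : States F G) :
    (Sm F Gh a * (Sm F G b)ᵀ) s t =
      if (s.2 : ℕ) = 0 ∧ (t.2 : ℕ) = 0 then
        ∑ j, (Gh s.1 j).coeff a * (G t.1 j).coeff b else 0 := by
  rw [Matrix.mul_apply]
  by_cases h : (s.2 : ℕ) = 0 ∧ (t.2 : ℕ) = 0
  · rw [if_pos h]
    refine Finset.sum_congr rfl fun j _ => ?_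
    rw [Matrix.transpose_apply, aux_Sm_apply, aux_Sm_apply, if_pos h.1, if_pos h.2]
  · rw [if_neg h]
    apply Finset.sum_eq_zero
    intro j _
    rw [Matrix.transpose_apply, aux_Sm_apply, aux_Sm_apply]
    by_cases h1 : (s.2 : ℕ) = 0
    · rw [if_neg (fun h2 => h ⟨h1, h2⟩), mul_zero]
    · rw [if_neg h1, zero_mul]

private lemma aux_lt_card {k : ℕ} (d : Fin k → ℕ) (s : StateIdx k d) :
    (s.2 : ℕ) < Fintype.card (StateIdx k d) := by
  have h1 : Fintype.card (StateIdx k d) = ∑ i, d i := by simp [Fintype.card_sigma]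
  have h2 : d s.1 ≤ ∑ i, d i :=
    Finset.single_le_sum (fun i _ => Nat.zero_le (d i)) (Finset.mem_univ s.1)
  have h3 := s.2.isLt
  omega

private lemma aux_Nm_apply {k kb n : ℕ} (G : Matrix (Fin k) (Fin n) (Polynomial F))
    (Gh : Matrix (Fin kb) (Fin n) (Polynomial F)) (s : States F Gh) (t : States F G) :
    Nm F G Gh s t = ∑ a ∈ Finset.range ((s.2 : ℕ) + 1),
      ∑ j, (Gh s.1 j).coeff a * (G t.1 j).coeff ((s.2 : ℕ) + (t.2 : ℕ) + 2 - a) := by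
  have hν : (s.2 : ℕ) < Fintype.card (States F Gh) := aux_lt_card (rowDeg F Gh) s
  have hν' : (t.2 : ℕ) < Fintype.card (States F G) := aux_lt_card (rowDeg F G) t
  have hT : ∀ m ∈ Finset.Icc 2 (Fintype.card (States F G) + Fintype.card (States F Gh)),
      ∀ i ∈ Finset.Icc 1 (m - 1), ∀ a : ℕ,
      ((matA F Gh)ᵀ ^ (i - 1) * Sm F Gh a * (Sm F G (m - a))ᵀ * matA F G ^ (m - (i + 1))) s t =
        if i = (s.2 : ℕ) + 1 ∧ m = (s.2 : ℕ) + (t.2 : ℕ) + 2 then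
          ∑ j, (Gh s.1 j).coeff a * (G t.1 j).coeff (m - a) else 0 := by
    intro m hm i hi a
    simp only [Finset.mem_Icc] at hm hi
    simp only [matA]
    rw [Matrix.mul_assoc ((ccfA F (rowDeg F Gh))ᵀ ^ (i - 1)), aux_mul_Apow]
    by_cases h1 : m - (i + 1) ≤ (t.2 : ℕ)
    · rw [dif_pos h1, aux_Atpow_mul]
      by_cases h2 : i - 1 ≤ (s.2 : ℕ)
      · rw [dif_pos h2, aux_SSt]
        simp only [Fin.val_mk]
        exact if_congr (by omega) rfl rfl
      · rw [dif_neg h2, if_neg (by omega)]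
    · rw [dif_neg h1, if_neg (by omega)]
  have hm0 : (s.2 : ℕ) + (t.2 : ℕ) + 2 ∈
      Finset.Icc 2 (Fintype.card (States F G) + Fintype.card (States F Gh)) :=
    Finset.mem_Icc.mpr ⟨by omega, by omega⟩
  have hi0 : (s.2 : ℕ) + 1 ∈ Finset.Icc 1 ((s.2 : ℕ) + (t.2 : ℕ) + 2 - 1) :=
    Finset.mem_Icc.mpr ⟨by omega, by omega⟩
  simp only [Nm, Matrix.sum_apply]
  rw [Finset.sum_eq_single_of_mem _ hm0 (fun m hm hne => Finset.sum_eq_zero fun i hi =>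
    Finset.sum_eq_zero fun a _ => by rw [hT m hm i hi a, if_neg (fun hc => hne hc.2)])]
  rw [Finset.sum_eq_single_of_mem _ hi0 (fun i hi hne => Finset.sum_eq_zero fun a _ => by
    rw [hT _ hm0 i hi a, if_neg (fun hc => hne hc.1)])]
  exact Finset.sum_congr rfl fun a _ => by rw [hT _ hm0 _ hi0 a, if_pos ⟨rfl, rfl⟩]

private lemma aux_orth {k kb n : ℕ} (G : Matrix (Fin k) (Fin n) (Polynomial F))
    (Gh : Matrix (Fin kb) (Fin n) (Polynomial F))
    (hdual : code F Gh = dualCode F (code F G)) (i : Fin kb) (i' : Fin k) (m : ℕ) :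
    ∑ a ∈ Finset.range (m + 1), ∑ j, (Gh i j).coeff a * (G i' j).coeff (m - a) = 0 := by
  have hrow : ∀ (p : ℕ) (M : Matrix (Fin p) (Fin n) (Polynomial F)) (l : Fin p),
      (fun j => M l j) ∈ code F M := by
    intro p M l
    refine ⟨Pi.single l 1, ?_⟩
    funext j
    simp [Matrix.vecMul, dotProduct, Pi.single_apply]
  have h1 : (fun j => Gh i j) ∈ dualCode F (code F G) := hdual ▸ hrow kb Gh i
  have h3 : ∑ j, Gh i j * G i' j = 0 := h1 _ (hrow k G i')
  rw [Finset.sum_comm]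
  calc ∑ j, ∑ a ∈ Finset.range (m + 1), (Gh i j).coeff a * (G i' j).coeff (m - a)
      = ∑ j, (Gh i j * G i' j).coeff m := by
        refine Finset.sum_congr rfl fun j _ => ?_
        rw [Polynomial.coeff_mul, Finset.Nat.sum_antidiagonal_eq_sum_range_succ_mk]
    _ = (∑ j, Gh i j * G i' j).coeff m := (Polynomial.finset_sum_coeff _ _ _).symm
    _ = 0 := by rw [h3, Polynomial.coeff_zero]

private lemma aux_split {M : Type} [AddCommMonoid M] (f : ℕ → M) (ν ν' : ℕ) :
    ∑ a ∈ Finset.range (ν + ν' + 2), f a =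
      (∑ a ∈ Finset.range (ν + 1), f a) +
        ∑ a ∈ Finset.range (ν' + 1), f (ν + ν' + 1 - a) := by
  have h1 : ∑ a ∈ Finset.range (ν' + 1), f (ν + ν' + 1 - a) =
      ∑ a ∈ Finset.range (ν' + 1), f (ν + 1 + a) := by
    rw [← Finset.sum_range_reflect (fun j => f (ν + 1 + j)) (ν' + 1)]
    refine Finset.sum_congr rfl fun a ha => ?_
    simp only [Finset.mem_range] at ha
    congr 1
    omega
  rw [h1, show ν + ν' + 2 = (ν + 1) + (ν' + 1) from by omega, Finset.sum_range_add]

end ConvCode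
end Aux14

/-- Proposition 4.7(b): `Ĉ S₀ᵀ + Ŝ₀ Cᵀ = N A + Âᵀ N̂ᵀ`. -/
theorem statement14 {F : Type} [Field F] [Fintype F]
    (k kb n : ℕ) (hkn : k + kb = n)
    (G : Matrix (Fin k) (Fin n) (Polynomial F)) (hG : ConvCode.IsMinimalEncoder F G)
    (Gh : Matrix (Fin kb) (Fin n) (Polynomial F)) (hGh : ConvCode.IsMinimalEncoder F Gh)
    (hdual : ConvCode.code F Gh = ConvCode.dualCode F (ConvCode.code F G)) :
    ConvCode.matC F Gh * (ConvCode.Sm F G 0)ᵀ + ConvCode.Sm F Gh 0 * (ConvCode.matC F G)ᵀ =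
      ConvCode.Nm F G Gh * ConvCode.matA F G +
        (ConvCode.matA F Gh)ᵀ * (ConvCode.Nm F Gh G)ᵀ := by
  ext s t
  have hL1 : (ConvCode.matC F Gh * (ConvCode.Sm F G 0)ᵀ) s t =
      (if (t.2 : ℕ) = 0 then
        ∑ j, (Gh s.1 j).coeff ((s.2 : ℕ) + 1) * (G t.1 j).coeff 0 else 0) := by
    rw [Matrix.mul_apply]
    by_cases h : (t.2 : ℕ) = 0
    · rw [if_pos h]
      refine Finset.sum_congr rfl fun j _ => ?_
      rw [Matrix.transpose_apply, ConvCode.aux_Sm_apply, if_pos h]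
      rfl
    · rw [if_neg h]
      refine Finset.sum_eq_zero fun j _ => ?_
      rw [Matrix.transpose_apply, ConvCode.aux_Sm_apply, if_neg h, mul_zero]
  have hL2 : (ConvCode.Sm F Gh 0 * (ConvCode.matC F G)ᵀ) s t =
      (if (s.2 : ℕ) = 0 then
        ∑ j, (Gh s.1 j).coeff 0 * (G t.1 j).coeff ((t.2 : ℕ) + 1) else 0) := by
    rw [Matrix.mul_apply]
    by_cases h : (s.2 : ℕ) = 0
    · rw [if_pos h]
      refine Finset.sum_congr rfl fun j _ => ?_
      rw [ConvCode.aux_Sm_apply, if_pos h]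
      rfl
    · rw [if_neg h]
      refine Finset.sum_eq_zero fun j _ => ?_
      rw [ConvCode.aux_Sm_apply, if_neg h, zero_mul]
  have hR1 : (ConvCode.Nm F G Gh * ConvCode.matA F G) s t =
      (if 1 ≤ (t.2 : ℕ) then
        ∑ a ∈ Finset.range ((s.2 : ℕ) + 1),
          ∑ j, (Gh s.1 j).coeff a *
            (G t.1 j).coeff ((s.2 : ℕ) + (t.2 : ℕ) + 1 - a) else 0) := by
    rw [show ConvCode.matA F G = ConvCode.ccfA F (ConvCode.rowDeg F G) ^ 1 from
      (pow_one _).symm, ConvCode.aux_mul_Apow]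
    by_cases h : 1 ≤ (t.2 : ℕ)
    · rw [dif_pos h, if_pos h, ConvCode.aux_Nm_apply]
      simp only [Fin.val_mk]
      rw [show (s.2 : ℕ) + ((t.2 : ℕ) - 1) + 2 = (s.2 : ℕ) + (t.2 : ℕ) + 1 from by omega]
    · rw [dif_neg h, if_neg h]
  have hR2 : ((ConvCode.matA F Gh)ᵀ * (ConvCode.Nm F Gh G)ᵀ) s t =
      (if 1 ≤ (s.2 : ℕ) then
        ∑ a ∈ Finset.range ((t.2 : ℕ) + 1),
          ∑ j, (Gh s.1 j).coeff ((s.2 : ℕ) + (t.2 : ℕ) + 1 - a) *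
            (G t.1 j).coeff a else 0) := by
    rw [show (ConvCode.matA F Gh)ᵀ = (ConvCode.ccfA F (ConvCode.rowDeg F Gh))ᵀ ^ 1 from
      (pow_one _).symm, ConvCode.aux_Atpow_mul]
    by_cases h : 1 ≤ (s.2 : ℕ)
    · rw [dif_pos h, if_pos h, Matrix.transpose_apply, ConvCode.aux_Nm_apply]
      simp only [Fin.val_mk]
      rw [show (t.2 : ℕ) + ((s.2 : ℕ) - 1) + 2 = (s.2 : ℕ) + (t.2 : ℕ) + 1 from by omega]
      exact Finset.sum_congr rfl fun a _ => Finset.sum_congr rfl fun j _ => mul_comm _ _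
    · rw [dif_neg h, if_neg h]
  rw [Matrix.add_apply, Matrix.add_apply, hL1, hL2, hR1, hR2]
  by_cases hs0 : (s.2 : ℕ) = 0 <;> by_cases ht0 : (t.2 : ℕ) = 0
  · rw [if_pos ht0, if_pos hs0, if_neg (by omega), if_neg (by omega)]
    have horth := ConvCode.aux_orth G Gh hdual s.1 t.1 ((s.2 : ℕ) + (t.2 : ℕ) + 1)
    rw [hs0, ht0] at horth ⊢
    norm_num [Finset.sum_range_succ] at horth ⊢
    linear_combination horth
  · rw [if_neg ht0, if_pos hs0, if_pos (by omega), if_neg (by omega), zero_add, add_zero]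
    rw [hs0]
    norm_num [Finset.sum_range_one]
  · rw [if_pos ht0, if_neg hs0, if_neg (by omega), if_pos (by omega), zero_add, add_zero]
    rw [ht0]
    norm_num [Finset.sum_range_one]
  · rw [if_neg ht0, if_neg hs0, if_pos (by omega), if_pos (by omega)]
    have hconv : ∑ a ∈ Finset.range ((t.2 : ℕ) + 1),
        ∑ j, (Gh s.1 j).coeff ((s.2 : ℕ) + (t.2 : ℕ) + 1 - a) * (G t.1 j).coeff a =
        ∑ a ∈ Finset.range ((t.2 : ℕ) + 1),
        ∑ j, (Gh s.1 j).coeff ((s.2 : ℕ) + (t.2 : ℕ) + 1 - a) *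
          (G t.1 j).coeff ((s.2 : ℕ) + (t.2 : ℕ) + 1 -
            ((s.2 : ℕ) + (t.2 : ℕ) + 1 - a)) := by
      refine Finset.sum_congr rfl fun a ha => Finset.sum_congr rfl fun j _ => ?_
      simp only [Finset.mem_range] at ha
      have hx : (s.2 : ℕ) + (t.2 : ℕ) + 1 - ((s.2 : ℕ) + (t.2 : ℕ) + 1 - a) = a := by omega
      rw [hx]
    have horth' : ∑ a ∈ Finset.range ((s.2 : ℕ) + (t.2 : ℕ) + 2),
        ∑ j, (Gh s.1 j).coeff a *
          (G t.1 j).coeff ((s.2 : ℕ) + (t.2 : ℕ) + 1 - a) = 0 :=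
      ConvCode.aux_orth G Gh hdual s.1 t.1 ((s.2 : ℕ) + (t.2 : ℕ) + 1)
    have hsplit : ∑ a ∈ Finset.range ((s.2 : ℕ) + (t.2 : ℕ) + 2),
        (∑ j, (Gh s.1 j).coeff a *
          (G t.1 j).coeff ((s.2 : ℕ) + (t.2 : ℕ) + 1 - a)) =
        (∑ a ∈ Finset.range ((s.2 : ℕ) + 1),
          ∑ j, (Gh s.1 j).coeff a *
            (G t.1 j).coeff ((s.2 : ℕ) + (t.2 : ℕ) + 1 - a)) +
        ∑ a ∈ Finset.range ((t.2 : ℕ) + 1),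
          ∑ j, (Gh s.1 j).coeff ((s.2 : ℕ) + (t.2 : ℕ) + 1 - a) *
            (G t.1 j).coeff ((s.2 : ℕ) + (t.2 : ℕ) + 1 -
              ((s.2 : ℕ) + (t.2 : ℕ) + 1 - a)) :=
      ConvCode.aux_split (fun a => ∑ j, (Gh s.1 j).coeff a *
        (G t.1 j).coeff ((s.2 : ℕ) + (t.2 : ℕ) + 1 - a)) (s.2 : ℕ) (t.2 : ℕ)
    rw [hconv, ← hsplit, horth']
    norm_num
end
end
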